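/- arXiv:1311.4030 — 10 statements merged into one kernel-verified Lean document; each statement's English description precedes it below -/
import Mathlib

section
/- K-Markov bounding inequality: for any integer K ≤ k, the indicator 1{V_m(t) ≥ k} is at most (1 / C(k,K)) · Σ_{X ⊆ H_0, |X|=K} 1{max_{i∈X} p_i ≤ t}, where the sum is over all size-K subsets X of the set of true nulls H_0. Consequently, P(V_m(t) ≥ k) ≤ (C(m_0,K)/C(k,K)) · max_{X: |X|=K} P(max_{i∈X} p_i ≤ t). -/
open MeasureTheory ENNReal

/-- K-Markov bounding inequality: for `K ≤ k`, pointwise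
`1{V_m(t) ≥ k} ≤ (1/C(k,K)) Σ_{X ⊆ H₀, |X| = K} 1{max_{i∈X} p_i ≤ t}`, and
consequently `P(V_m(t) ≥ k) ≤ (C(m₀,K)/C(k,K)) · max_{X ⊆ H₀, |X|=K} P(max_{i∈X} p_i ≤ t)`. -/
theorem stmt_3 {Ω : Type*} [MeasurableSpace Ω] (P : Measure Ω) [IsProbabilityMeasure P]
    (m m0 K k : ℕ) (H0 : Finset (Fin m)) (hcard : H0.card = m0)
    (hK : 1 ≤ K) (hKk : K ≤ k) (hkm0 : k ≤ m0)
    (p : Fin m → Ω → ℝ) (hmeas : ∀ i, Measurable (p i)) (t : ℝ)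
    (hne : (H0.powersetCard K).Nonempty) :
    (∀ ω, (if k ≤ (H0.filter (fun i => p i ω ≤ t)).card then (1:ℝ) else 0)
        ≤ (1 / (k.choose K : ℝ)) *
          ∑ X ∈ H0.powersetCard K, (if ∀ i ∈ X, p i ω ≤ t then (1:ℝ) else 0))
    ∧ (P {ω | k ≤ (H0.filter (fun i => p i ω ≤ t)).card}).toReal
        ≤ ((m0.choose K : ℝ) / (k.choose K : ℝ)) *
          (H0.powersetCard K).sup' hne
            (fun X => (P {ω | ∀ i ∈ X, p i ω ≤ t}).toReal) := by
  classical
  have hcpos : 0 < k.choose K := Nat.choose_pos hKk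
  have hcposR : (0:ℝ) < (k.choose K : ℝ) := by exact_mod_cast hcpos
  -- key counting lemma
  have key : ∀ ω, k ≤ (H0.filter (fun i => p i ω ≤ t)).card →
      k.choose K ≤ ((H0.powersetCard K).filter (fun X => ∀ i ∈ X, p i ω ≤ t)).card := by
    intro ω hω
    have hsub : (H0.filter (fun i => p i ω ≤ t)).powersetCard K ⊆
        (H0.powersetCard K).filter (fun X => ∀ i ∈ X, p i ω ≤ t) := by
      intro X hX
      rw [Finset.mem_powersetCard] at hX
      rw [Finset.mem_filter, Finset.mem_powersetCard]
      exact ⟨⟨hX.1.trans (Finset.filter_subset _ _), hX.2⟩,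
        fun i hi => (Finset.mem_filter.mp (hX.1 hi)).2⟩
    calc k.choose K ≤ (H0.filter (fun i => p i ω ≤ t)).card.choose K :=
          Nat.choose_le_choose K hω
      _ = ((H0.filter (fun i => p i ω ≤ t)).powersetCard K).card :=
          (Finset.card_powersetCard _ _).symm
      _ ≤ _ := Finset.card_le_card hsub
  have part1 : ∀ ω, (if k ≤ (H0.filter (fun i => p i ω ≤ t)).card then (1:ℝ) else 0)
        ≤ (1 / (k.choose K : ℝ)) *
          ∑ X ∈ H0.powersetCard K, (if ∀ i ∈ X, p i ω ≤ t then (1:ℝ) else 0) := by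
    intro ω
    have hsum : ∑ X ∈ H0.powersetCard K, (if ∀ i ∈ X, p i ω ≤ t then (1:ℝ) else 0)
        = (((H0.powersetCard K).filter (fun X => ∀ i ∈ X, p i ω ≤ t)).card : ℝ) := by
      rw [Finset.sum_boole]
    by_cases h : k ≤ (H0.filter (fun i => p i ω ≤ t)).card
    · rw [if_pos h, hsum, one_div, inv_mul_eq_div, le_div_iff₀ hcposR, one_mul]
      exact_mod_cast key ω h
    · rw [if_neg h]
      apply mul_nonneg (by positivity)
      apply Finset.sum_nonneg
      intro X _
      split <;> norm_num
  refine ⟨part1, ?_⟩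
  -- measurability
  have hBmeas : ∀ X : Finset (Fin m), MeasurableSet {ω | ∀ i ∈ X, p i ω ≤ t} := by
    intro X
    have : {ω | ∀ i ∈ X, p i ω ≤ t} = ⋂ i ∈ X, {ω | p i ω ≤ t} := by
      ext ω; simp
    rw [this]
    exact MeasurableSet.biInter (X : Set (Fin m)).to_countable
      (fun i _ => (hmeas i) measurableSet_Iic)
  set A : Set Ω := {ω | k ≤ (H0.filter (fun i => p i ω ≤ t)).card} with hA
  have hAeq : A = ⋃ X ∈ H0.powersetCard k, {ω | ∀ i ∈ X, p i ω ≤ t} := by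
    ext ω
    simp only [hA, Set.mem_setOf_eq, Set.mem_iUnion, Finset.mem_powersetCard]
    constructor
    · intro h
      obtain ⟨X, hX, hXc⟩ := Finset.exists_subset_card_eq h
      exact ⟨X, ⟨⟨hX.trans (Finset.filter_subset _ _), hXc⟩,
        fun i hi => (Finset.mem_filter.mp (hX hi)).2⟩⟩
    · rintro ⟨X, ⟨hXH, hXc⟩, hXp⟩
      have : X ⊆ H0.filter (fun i => p i ω ≤ t) := fun i hi =>
        Finset.mem_filter.mpr ⟨hXH hi, hXp i hi⟩
      calc k = X.card := hXc.symm
        _ ≤ _ := Finset.card_le_card this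
  have hAmeas : MeasurableSet A := by
    rw [hAeq]
    exact MeasurableSet.biUnion (Finset.countable_toSet (H0.powersetCard k))
      (fun X _ => hBmeas X)
  -- ENNReal inequality via lintegral
  have hptwise : ∀ ω, A.indicator (fun _ => (k.choose K : ℝ≥0∞)) ω ≤
      ∑ X ∈ H0.powersetCard K, {ω | ∀ i ∈ X, p i ω ≤ t}.indicator (fun _ => (1:ℝ≥0∞)) ω := by
    intro ω
    by_cases h : ω ∈ A
    · rw [Set.indicator_of_mem h]
      have hsum : ∑ X ∈ H0.powersetCard K,
          {ω | ∀ i ∈ X, p i ω ≤ t}.indicator (fun _ => (1:ℝ≥0∞)) ω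
          = (((H0.powersetCard K).filter (fun X => ∀ i ∈ X, p i ω ≤ t)).card : ℝ≥0∞) := by
        rw [Finset.card_filter]
        push_cast
        refine Finset.sum_congr rfl fun X _ => ?_
        by_cases hX : ∀ i ∈ X, p i ω ≤ t
        · rw [Set.indicator_of_mem (show ω ∈ {ω | ∀ i ∈ X, p i ω ≤ t} from hX), if_pos hX]
        · rw [Set.indicator_of_notMem (show ω ∉ {ω | ∀ i ∈ X, p i ω ≤ t} from hX), if_neg hX]
      rw [hsum]
      exact_mod_cast key ω h
    · rw [Set.indicator_of_notMem h]
      exact zero_le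
  have hintle : (k.choose K : ℝ≥0∞) * P A ≤
      ∑ X ∈ H0.powersetCard K, P {ω | ∀ i ∈ X, p i ω ≤ t} := by
    calc (k.choose K : ℝ≥0∞) * P A
        = ∫⁻ ω, A.indicator (fun _ => (k.choose K : ℝ≥0∞)) ω ∂P := by
          rw [lintegral_indicator_const hAmeas]
      _ ≤ ∫⁻ ω, ∑ X ∈ H0.powersetCard K,
            {ω | ∀ i ∈ X, p i ω ≤ t}.indicator (fun _ => (1:ℝ≥0∞)) ω ∂P :=
          lintegral_mono hptwise
      _ = ∑ X ∈ H0.powersetCard K, ∫⁻ ω,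
            {ω | ∀ i ∈ X, p i ω ≤ t}.indicator (fun _ => (1:ℝ≥0∞)) ω ∂P := by
          rw [lintegral_finset_sum]
          exact fun X _ => (measurable_const.indicator (hBmeas X))
      _ = ∑ X ∈ H0.powersetCard K, P {ω | ∀ i ∈ X, p i ω ≤ t} := by
          refine Finset.sum_congr rfl fun X _ => ?_
          rw [lintegral_indicator_const (hBmeas X), one_mul]
  -- convert to reals
  have hfin : ∀ X ∈ H0.powersetCard K, P {ω | ∀ i ∈ X, p i ω ≤ t} ≠ ⊤ :=
    fun X _ => measure_ne_top P _
  have hreal : (k.choose K : ℝ) * (P A).toReal ≤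
      ∑ X ∈ H0.powersetCard K, (P {ω | ∀ i ∈ X, p i ω ≤ t}).toReal := by
    have h1 : ((k.choose K : ℝ≥0∞) * P A).toReal ≤
        (∑ X ∈ H0.powersetCard K, P {ω | ∀ i ∈ X, p i ω ≤ t}).toReal := by
      apply ENNReal.toReal_mono _ hintle
      exact ENNReal.sum_ne_top.mpr hfin
    rw [ENNReal.toReal_mul, ENNReal.toReal_sum hfin] at h1
    simpa using h1
  have hsup : ∑ X ∈ H0.powersetCard K, (P {ω | ∀ i ∈ X, p i ω ≤ t}).toReal
      ≤ (m0.choose K : ℝ) * (H0.powersetCard K).sup' hne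
          (fun X => (P {ω | ∀ i ∈ X, p i ω ≤ t}).toReal) := by
    calc ∑ X ∈ H0.powersetCard K, (P {ω | ∀ i ∈ X, p i ω ≤ t}).toReal
        ≤ ∑ X ∈ H0.powersetCard K, (H0.powersetCard K).sup' hne
          (fun X => (P {ω | ∀ i ∈ X, p i ω ≤ t}).toReal) :=
          Finset.sum_le_sum fun X hX => Finset.le_sup' (fun X => (P {ω | ∀ i ∈ X, p i ω ≤ t}).toReal) hX
      _ = ((H0.powersetCard K).card : ℝ) * _ := by
          rw [Finset.sum_const, nsmul_eq_mul]
      _ = (m0.choose K : ℝ) * _ := by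
          rw [Finset.card_powersetCard, hcard]
  rw [div_mul_eq_mul_div, le_div_iff₀ hcposR, mul_comm]
  exact hreal.trans hsup
end

section
/- Step-up case of Proposition 5: if ℓ̂ is the number of rejections of the step-up procedure and FDP_m(τ_{ℓ̂}) > α, then ℓ̂ ≤ b_α(m_0) := (⌈m_0/α⌉ − 1) ∧ m and V_m(τ_{ℓ̂}) ≥ (⌊α ℓ̂⌋ + 1) ∨ (ℓ̂ − m_1), where m_1 = m − m_0. Hence P(FDP_m(τ_{ℓ̂}) > α) = Σ_{ℓ=1}^{b_α(m_0)} P(V_m(τ_ℓ) ≥ d(ℓ,m,m_0), ℓ̂ = ℓ) with d(ℓ,m,m_0) = (⌊α ℓ⌋ + 1) ∨ (ℓ − m + m_0). -/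
open MeasureTheory

/-- Step-up case of Proposition 5: if `ℓ̂` is the step-up rejection number
(so `R_m(τ_ℓ̂) = ℓ̂`) and `FDP_m(τ_ℓ̂) > α`, then `ℓ̂ ≤ b_α(m₀) = (⌈m₀/α⌉−1) ∧ m`
and `V_m(τ_ℓ̂) ≥ (⌊α ℓ̂⌋+1) ∨ (ℓ̂ − m₁)`; hence
`P(FDP_m(τ_ℓ̂) > α) = Σ_{ℓ=1}^{b_α(m₀)} P(V_m(τ_ℓ) ≥ d(ℓ,m,m₀), ℓ̂ = ℓ)`
with `d(ℓ,m,m₀) = (⌊αℓ⌋+1) ∨ (ℓ − m + m₀)`. -/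
theorem stmt_7 {Ω : Type*} [MeasurableSpace Ω] (P : Measure Ω) [IsProbabilityMeasure P]
    (m : ℕ) (H : Fin m → Bool) (m0 m1 : ℕ)
    (hm0 : m0 = (Finset.univ.filter (fun i => H i = false)).card)
    (hm1 : m1 = m - m0)
    (p : Fin m → Ω → ℝ) (hmeas : ∀ i, Measurable (p i))
    (τ : ℕ → ℝ) (hτmono : ∀ k l, k ≤ l → l ≤ m → τ k ≤ τ l)
    (α : ℝ) (hα : α ∈ Set.Ioo (0:ℝ) 1)
    (lhat : Ω → ℕ) (hlmeas : Measurable lhat) (hlm : ∀ ω, lhat ω ≤ m)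
    (hswitch : ∀ ω, (Finset.univ.filter (fun i => p i ω ≤ τ (lhat ω))).card = lhat ω)
    (b : ℕ) (hb : b = min (⌈(m0 : ℝ) / α⌉ - 1).toNat m)
    (d : ℕ → ℤ) (hd : ∀ l : ℕ, d l = max (⌊α * (l : ℝ)⌋ + 1) ((l : ℤ) - m + m0)) :
    (∀ ω,
      ((Finset.univ.filter (fun i => H i = false ∧ p i ω ≤ τ (lhat ω))).card : ℝ) /
          max ((lhat ω : ℕ) : ℝ) 1 > α →
        lhat ω ≤ b ∧
          d (lhat ω)
            ≤ ((Finset.univ.filter (fun i => H i = false ∧ p i ω ≤ τ (lhat ω))).card : ℤ))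
    ∧ P {ω | ((Finset.univ.filter (fun i => H i = false ∧ p i ω ≤ τ (lhat ω))).card : ℝ) /
            max ((lhat ω : ℕ) : ℝ) 1 > α}
        = ∑ l ∈ Finset.Icc 1 b,
            P {ω | d l ≤ ((Finset.univ.filter
                  (fun i => H i = false ∧ p i ω ≤ τ l)).card : ℤ)
                ∧ lhat ω = l} := by
  obtain ⟨hα0, hα1⟩ := hα
  have hm0m : m0 ≤ m := by
    rw [hm0]
    exact (Finset.card_filter_le _ _).trans (by simp)
  have claim1 : ∀ ω,
      ((Finset.univ.filter (fun i => H i = false ∧ p i ω ≤ τ (lhat ω))).card : ℝ) /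
          max ((lhat ω : ℕ) : ℝ) 1 > α →
      1 ≤ lhat ω ∧ lhat ω ≤ b ∧
        d (lhat ω) ≤ ((Finset.univ.filter
          (fun i => H i = false ∧ p i ω ≤ τ (lhat ω))).card : ℤ) := by
    intro ω h
    set R := lhat ω with hR
    set v := (Finset.univ.filter (fun i => H i = false ∧ p i ω ≤ τ R)).card with hv
    have hsw : (Finset.univ.filter (fun i => p i ω ≤ τ R)).card = R := hswitch ω
    have hVR : v ≤ R := by
      rw [← hsw]
      exact Finset.card_le_card (Finset.monotone_filter_right _ (fun i _ hi => hi.2))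
    have hR1 : 1 ≤ R := by
      by_contra hc
      have hR0 : R = 0 := by omega
      have hv0 : v = 0 := by omega
      rw [hv0, hR0] at h
      simp at h
      linarith
    have hmax : max ((R : ℕ) : ℝ) 1 = (R : ℝ) := by
      apply max_eq_left
      exact_mod_cast hR1
    rw [hmax] at h
    have hRpos : (0:ℝ) < (R : ℝ) := by exact_mod_cast hR1
    have hvR : α * R < (v : ℝ) := by
      rw [gt_iff_lt, lt_div_iff₀ hRpos] at h
      linarith
    have hVm0 : v ≤ m0 := by
      rw [hv, hm0]
      exact Finset.card_le_card (Finset.monotone_filter_right _ (fun i _ hi => hi.1))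
    -- R ≤ b
    have hRlt : (R : ℝ) < (m0 : ℝ) / α := by
      rw [lt_div_iff₀ hα0]
      have : (v : ℝ) ≤ (m0 : ℝ) := by exact_mod_cast hVm0
      linarith [hvR]
    have hceil : (R : ℤ) < ⌈(m0 : ℝ) / α⌉ := Int.lt_ceil.mpr hRlt
    have hRb : R ≤ b := by
      rw [hb]
      have := hlm ω
      omega
    refine ⟨hR1, hRb, ?_⟩
    rw [hd]
    apply max_le
    · have : ⌊α * (R : ℝ)⌋ < (v : ℤ) := Int.floor_lt.mpr (by exact_mod_cast hvR)
      omega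
    · -- R ≤ v + (m - m0)
      have hdec : R ≤ v + (m - m0) := by
        rw [← hsw]
        have h1 : (Finset.univ.filter (fun i => p i ω ≤ τ R)).card
            = ((Finset.univ.filter (fun i => p i ω ≤ τ R)).filter
                (fun i => H i = false)).card
              + ((Finset.univ.filter (fun i => p i ω ≤ τ R)).filter
                (fun i => ¬ (H i = false))).card := by
          rw [Finset.card_filter_add_card_filter_not]
        have h2 : ((Finset.univ.filter (fun i => p i ω ≤ τ R)).filter
            (fun i => H i = false)).card = v := by
          rw [hv, Finset.filter_filter]
          congr 1
          apply Finset.filter_congr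
          intro i _
          tauto
        have h3 : ((Finset.univ.filter (fun i => p i ω ≤ τ R)).filter
            (fun i => ¬ (H i = false))).card ≤ m - m0 := by
          have hsub : ((Finset.univ.filter (fun i => p i ω ≤ τ R)).filter
              (fun i => ¬ (H i = false))).card
              ≤ (Finset.univ.filter (fun i => ¬ (H i = false))).card := by
            apply Finset.card_le_card
            rw [Finset.filter_filter]
            exact Finset.monotone_filter_right _ (fun i _ hi => hi.2)
          have hc : (Finset.univ.filter (fun i => H i = false)).card
              + (Finset.univ.filter (fun i => ¬ (H i = false))).card = m := by
            rw [Finset.card_filter_add_card_filter_not]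
            simp
          omega
        omega
      have : (R : ℤ) ≤ (v : ℤ) + ((m : ℤ) - m0) := by
        push_cast
        omega
      omega
  constructor
  · intro ω h
    exact ⟨(claim1 ω h).2.1, (claim1 ω h).2.2⟩
  · have hmeasB : ∀ l : ℕ, MeasurableSet {ω | d l ≤ ((Finset.univ.filter
        (fun i => H i = false ∧ p i ω ≤ τ l)).card : ℤ) ∧ lhat ω = l} := by
      intro l
      have hf : Measurable (fun ω => ((Finset.univ.filter
          (fun i => H i = false ∧ p i ω ≤ τ l)).card : ℤ)) := by
        have heq : (fun ω => ((Finset.univ.filter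
            (fun i => H i = false ∧ p i ω ≤ τ l)).card : ℤ))
            = fun ω => ∑ i : Fin m, if H i = false ∧ p i ω ≤ τ l then (1:ℤ) else 0 := by
          funext ω
          rw [Finset.card_filter]
          push_cast
          rfl
        rw [heq]
        apply Finset.measurable_sum
        intro i _
        exact Measurable.ite
          ((MeasurableSet.const _).inter (measurableSet_le (hmeas i) measurable_const))
          measurable_const measurable_const
      exact (hf measurableSet_Ici).inter (hlmeas (measurableSet_singleton l))
    have hunion : {ω | ((Finset.univ.filter
          (fun i => H i = false ∧ p i ω ≤ τ (lhat ω))).card : ℝ) /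
            max ((lhat ω : ℕ) : ℝ) 1 > α}
        = ⋃ l ∈ Finset.Icc 1 b, {ω | d l ≤ ((Finset.univ.filter
            (fun i => H i = false ∧ p i ω ≤ τ l)).card : ℤ) ∧ lhat ω = l} := by
      ext ω
      simp only [Set.mem_setOf_eq, Set.mem_iUnion, Finset.mem_Icc, exists_prop]
      constructor
      · intro h
        obtain ⟨h1, h2, h3⟩ := claim1 ω h
        exact ⟨lhat ω, ⟨h1, h2⟩, h3, rfl⟩
      · rintro ⟨l, ⟨hl1, hl2⟩, hd1, hl⟩
        subst hl
        rw [hd] at hd1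
        have hfl : ⌊α * ((lhat ω : ℕ) : ℝ)⌋ + 1
            ≤ ((Finset.univ.filter
              (fun i => H i = false ∧ p i ω ≤ τ (lhat ω))).card : ℤ) :=
          le_trans (le_max_left _ _) hd1
        have hvR : α * ((lhat ω : ℕ) : ℝ) < ((Finset.univ.filter
            (fun i => H i = false ∧ p i ω ≤ τ (lhat ω))).card : ℝ) := by
          have h2 : α * ((lhat ω : ℕ) : ℝ) < (⌊α * ((lhat ω : ℕ) : ℝ)⌋ : ℝ) + 1 :=
            Int.lt_floor_add_one _
          have h3 : ((⌊α * ((lhat ω : ℕ) : ℝ)⌋ : ℝ) + 1)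
              ≤ ((Finset.univ.filter
                (fun i => H i = false ∧ p i ω ≤ τ (lhat ω))).card : ℝ) := by
            exact_mod_cast hfl
          linarith
        have hRpos : (0:ℝ) < ((lhat ω : ℕ) : ℝ) := by exact_mod_cast hl1
        have hmax : max ((lhat ω : ℕ) : ℝ) 1 = ((lhat ω : ℕ) : ℝ) :=
          max_eq_left (by exact_mod_cast hl1)
        rw [hmax, gt_iff_lt, lt_div_iff₀ hRpos]
        linarith
    rw [hunion]
    rw [measure_biUnion_finset ?_ (fun l _ => hmeasB l)]
    intro l _ l' _ hne
    apply Set.disjoint_left.mpr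
    rintro ω ⟨_, h1⟩ ⟨_, h2⟩
    exact hne (h1 ▸ h2 ▸ rfl)
end

section
/- Telescoping bound (Proposition 7.2): Let ℓ̃ be a random index in {1,...,m+1} and let (Z_{ℓ,ℓ'}) be [0,∞)-valued random variables, a.s. nondecreasing in ℓ and nonincreasing in ℓ', with Z_{0,ℓ'} = 0 and Z_{ℓ,0} = 1, such that 1{V_m(τ_ℓ) ≥ d(ℓ',m,m_0)} ≤ Z_{ℓ,ℓ'} a.s. Then Σ_{ℓ=1}^{b} P(V_m(τ_ℓ) ≥ d(ℓ,m,m_0), ℓ̃ = ℓ) ≤ Σ_{ℓ=1}^{b} (E[Z_{ℓ,ℓ−1}] − E[Z_{ℓ−1,ℓ−1}]) ∧ (E[Z_{ℓ,ℓ}] − E[Z_{ℓ−1,ℓ}]) for any b ∈ {1,...,m}. -/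
open MeasureTheory

private lemma telescope_aux (F : ℕ → ℝ) : ∀ k, ∑ l ∈ Finset.Icc 1 k, (F l - F (l - 1)) = F k - F 0 := by
  intro k
  induction k with
  | zero => simp
  | succ n ih =>
      rw [Finset.sum_Icc_succ_top (Nat.succ_le_succ (Nat.zero_le n)), ih]
      simp

/-- Telescoping bound (Proposition 7.2): if `Z ℓ ℓ'` dominates the indicator of
`{V(τ_ℓ) ≥ d(ℓ')}`, is nondecreasing in `ℓ`, nonincreasing in `ℓ'`, with
`Z 0 ℓ' = 0` and `Z ℓ 0 = 1` (ℓ ≥ 1), then for any random index `ℓ̃` with values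
in `{1,…,m+1}` and any `b ∈ {1,…,m}`:
`Σ_{ℓ=1}^{b} P(V(τ_ℓ) ≥ d(ℓ), ℓ̃ = ℓ)
  ≤ Σ_{ℓ=1}^{b} (E[Z_{ℓ,ℓ−1}] − E[Z_{ℓ−1,ℓ−1}]) ∧ (E[Z_{ℓ,ℓ}] − E[Z_{ℓ−1,ℓ}])`. -/
theorem stmt_8 {Ω : Type*} [MeasurableSpace Ω] (P : Measure Ω) [IsProbabilityMeasure P]
    (m b : ℕ) (hb1 : 1 ≤ b) (hbm : b ≤ m)
    (V : ℕ → Ω → ℕ) (hVmeas : ∀ l, Measurable (V l)) (d : ℕ → ℕ)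
    (ltil : Ω → ℕ) (hltilmeas : Measurable ltil)
    (hltilran : ∀ ω, 1 ≤ ltil ω ∧ ltil ω ≤ m + 1)
    (Z : ℕ → ℕ → Ω → ℝ) (hZmeas : ∀ l l', Measurable (Z l l'))
    (hZnonneg : ∀ l l' ω, 0 ≤ Z l l' ω)
    (hZint : ∀ l l', Integrable (Z l l') P)
    (hZ0 : ∀ l' ω, Z 0 l' ω = 0)
    (hZ1 : ∀ l ω, 1 ≤ l → Z l 0 ω = 1)
    (hZmono1 : ∀ l₁ l₂ l' ω, l₁ ≤ l₂ → Z l₁ l' ω ≤ Z l₂ l' ω)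
    (hZmono2 : ∀ l l₁' l₂' ω, l₁' ≤ l₂' → Z l l₂' ω ≤ Z l l₁' ω)
    (hZdom : ∀ l l' ω, d l' ≤ V l ω → 1 ≤ Z l l' ω) :
    ∑ l ∈ Finset.Icc 1 b, (P {ω | d l ≤ V l ω ∧ ltil ω = l}).toReal
      ≤ ∑ l ∈ Finset.Icc 1 b,
          min ((∫ ω, Z l (l - 1) ω ∂P) - ∫ ω, Z (l - 1) (l - 1) ω ∂P)
              ((∫ ω, Z l l ω ∂P) - ∫ ω, Z (l - 1) l ω ∂P) := by
  classical
  set s : ℕ → Set Ω := fun l => {ω | d l ≤ V l ω ∧ ltil ω = l} with hs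
  have hsmeas : ∀ l, MeasurableSet (s l) := fun l =>
    (measurableSet_le measurable_const (hVmeas l)).inter (hltilmeas (measurableSet_singleton l))
  set f : ℕ → Ω → ℝ := fun l => (s l).indicator 1 with hfdef
  set g : ℕ → Ω → ℝ := fun l ω =>
    min (Z l (l - 1) ω - Z (l - 1) (l - 1) ω) (Z l l ω - Z (l - 1) l ω) with hgdef
  have hgnonneg : ∀ l ω, 0 ≤ g l ω := by
    intro l ω
    exact le_min (sub_nonneg.mpr (hZmono1 _ _ _ _ (Nat.sub_le l 1)))
      (sub_nonneg.mpr (hZmono1 _ _ _ _ (Nat.sub_le l 1)))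
  have hgtel : ∀ l ω, Z l l ω - Z (l - 1) (l - 1) ω ≤ g l ω := by
    intro l ω
    refine le_min (by have := hZmono2 l (l - 1) l ω (Nat.sub_le l 1); linarith)
      (by have := hZmono2 (l - 1) (l - 1) l ω (Nat.sub_le l 1); linarith)
  -- pointwise inequality
  have hpt : ∀ ω, ∑ l ∈ Finset.Icc 1 b, f l ω ≤ ∑ l ∈ Finset.Icc 1 b, g l ω := by
    intro ω
    by_cases hk : ltil ω ∈ Finset.Icc 1 b ∧ d (ltil ω) ≤ V (ltil ω) ω
    · obtain ⟨hkmem, hkev⟩ := hk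
      have hsumf : ∑ l ∈ Finset.Icc 1 b, f l ω = 1 := by
        rw [Finset.sum_eq_single (ltil ω)]
        · simp only [hfdef, Set.indicator_apply, hs]
          rw [if_pos ⟨hkev, rfl⟩]; rfl
        · intro l hl hne
          simp only [hfdef, Set.indicator_apply, hs]
          rw [if_neg]; intro h; exact hne h.2.symm
        · intro h; exact absurd hkmem h
      rw [hsumf]
      have hk1 : 1 ≤ ltil ω := (hltilran ω).1
      have hkb : ltil ω ≤ b := (Finset.mem_Icc.mp hkmem).2
      calc (1 : ℝ) ≤ Z (ltil ω) (ltil ω) ω := hZdom _ _ _ hkev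
        _ = Z (ltil ω) (ltil ω) ω - Z 0 0 ω := by rw [hZ0]; ring
        _ = ∑ l ∈ Finset.Icc 1 (ltil ω), (Z l l ω - Z (l - 1) (l - 1) ω) := by
            rw [telescope_aux (fun l => Z l l ω)]
        _ ≤ ∑ l ∈ Finset.Icc 1 (ltil ω), g l ω :=
            Finset.sum_le_sum fun l _ => hgtel l ω
        _ ≤ ∑ l ∈ Finset.Icc 1 b, g l ω := by
            refine Finset.sum_le_sum_of_subset_of_nonneg ?_ fun l _ _ => hgnonneg l ω
            exact Finset.Icc_subset_Icc_right hkb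
    · have hsumf : ∑ l ∈ Finset.Icc 1 b, f l ω = 0 := by
        refine Finset.sum_eq_zero fun l hl => ?_
        simp only [hfdef, Set.indicator_apply, hs]
        rw [if_neg]
        intro h
        exact hk ⟨h.2 ▸ hl, h.2 ▸ h.1⟩
      rw [hsumf]
      exact Finset.sum_nonneg fun l _ => hgnonneg l ω
  have hfint : ∀ l, Integrable (f l) P := fun l => (integrable_const 1).indicator (hsmeas l)
  have hgint : ∀ l, Integrable (g l) P := by
    intro l
    have : g l = ((fun ω => Z l (l - 1) ω - Z (l - 1) (l - 1) ω) ⊓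
        fun ω => Z l l ω - Z (l - 1) l ω) := rfl
    rw [this]
    exact ((hZint _ _).sub (hZint _ _)).inf ((hZint _ _).sub (hZint _ _))
  calc ∑ l ∈ Finset.Icc 1 b, (P (s l)).toReal
      = ∑ l ∈ Finset.Icc 1 b, ∫ ω, f l ω ∂P := by
        refine Finset.sum_congr rfl fun l _ => ?_
        rw [hfdef, integral_indicator_one (hsmeas l)]; rfl
    _ = ∫ ω, ∑ l ∈ Finset.Icc 1 b, f l ω ∂P := (integral_finset_sum _ fun l _ => hfint l).symm
    _ ≤ ∫ ω, ∑ l ∈ Finset.Icc 1 b, g l ω ∂P := by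
        refine integral_mono (integrable_finset_sum _ fun l _ => hfint l)
          (integrable_finset_sum _ fun l _ => hgint l) hpt
    _ = ∑ l ∈ Finset.Icc 1 b, ∫ ω, g l ω ∂P := integral_finset_sum _ fun l _ => hgint l
    _ ≤ _ := by
        refine Finset.sum_le_sum fun l _ => ?_
        refine le_min ?_ ?_
        · rw [← integral_sub (hZint _ _) (hZint _ _)]
          exact integral_mono (hgint l) ((hZint _ _).sub (hZint _ _))
            fun ω => min_le_left _ _
        · rw [← integral_sub (hZint _ _) (hZint _ _)]
          exact integral_mono (hgint l) ((hZint _ _).sub (hZint _ _))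
            fun ω => min_le_right _ _
end

section
/- Romano–Shaikh-type bound as corollary: taking Z_{ℓ,ℓ'} = V_m(τ_ℓ)/d(ℓ',m,m_0) in the telescoping bound gives Σ_{ℓ=1}^{b} P(V_m(τ_ℓ) ≥ d(ℓ,m,m_0), ℓ̃ = ℓ) ≤ m_0 Σ_{ℓ=1}^{b} (E[V_m(τ_ℓ)] − E[V_m(τ_{ℓ−1})])/(m_0 d(ℓ,m,m_0)); in particular, if each null p-value is superuniform and V_m is the null count, this is at most m_0 Σ_{ℓ=1}^{b} (τ_ℓ − τ_{ℓ−1})/d(ℓ,m,m_0). -/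
open MeasureTheory

lemma abel_aux (g h c : ℕ → ℝ) (hg0 : g 0 = 0) (hh0 : h 0 = 0) :
    ∀ b : ℕ, (∀ k, 1 ≤ k → k ≤ b → g k ≤ h k) →
      (∀ k, 1 ≤ k → k + 1 ≤ b → c (k + 1) ≤ c k) →
      (∑ k ∈ Finset.Icc 1 b, (g k - g (k - 1)) * c k) - g b * c b ≤
        (∑ k ∈ Finset.Icc 1 b, (h k - h (k - 1)) * c k) - h b * c b := by
  intro b
  induction b with
  | zero => intro _ _; simp [hg0, hh0]
  | succ n ih =>
    intro hgh hc
    have ih' := ih (fun k hk1 hk2 => hgh k hk1 (by omega)) (fun k hk1 hk2 => hc k hk1 (by omega))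
    rw [Finset.sum_Icc_succ_top (by omega : 1 ≤ n + 1), Finset.sum_Icc_succ_top (by omega : 1 ≤ n + 1)]
    have hsimp : n + 1 - 1 = n := by omega
    rw [hsimp]
    have hkey : g n * (c n - c (n + 1)) ≤ h n * (c n - c (n + 1)) := by
      rcases Nat.eq_zero_or_pos n with hn | hn
      · subst hn; rw [hg0, hh0]
      · exact mul_le_mul_of_nonneg_right (hgh n hn (by omega))
          (sub_nonneg.mpr (hc n hn le_rfl))
    nlinarith [ih', hkey]

lemma abel_ineq (g h c : ℕ → ℝ) (b : ℕ) (hg0 : g 0 = 0) (hh0 : h 0 = 0)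
    (hgh : ∀ k, 1 ≤ k → k ≤ b → g k ≤ h k)
    (hc0 : 0 ≤ c b)
    (hc : ∀ k, 1 ≤ k → k + 1 ≤ b → c (k + 1) ≤ c k) :
    ∑ k ∈ Finset.Icc 1 b, (g k - g (k - 1)) * c k ≤
      ∑ k ∈ Finset.Icc 1 b, (h k - h (k - 1)) * c k := by
  have h1 := abel_aux g h c hg0 hh0 b hgh hc
  have h2 : g b * c b ≤ h b * c b := by
    rcases Nat.eq_zero_or_pos b with hb | hb
    · subst hb; rw [hg0, hh0]
    · exact mul_le_mul_of_nonneg_right (hgh b hb le_rfl) hc0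
  linarith

/-- Romano–Shaikh-type bound: taking `Z_{ℓ,ℓ'} = V_m(τ_ℓ)/d(ℓ')` in the
telescoping bound gives
`Σ_{ℓ=1}^{b} P(V_m(τ_ℓ) ≥ d(ℓ), ℓ̃ = ℓ) ≤ m₀ Σ_{ℓ=1}^{b} (E[V_m(τ_ℓ)]−E[V_m(τ_{ℓ−1})])/(m₀ d(ℓ))`,
and, for superuniform null p-values, this is at most
`m₀ Σ_{ℓ=1}^{b} (τ_ℓ − τ_{ℓ−1})/d(ℓ)`. -/
theorem stmt_9 {Ω : Type*} [MeasurableSpace Ω] (P : Measure Ω) [IsProbabilityMeasure P]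
    (m m0 b : ℕ) (hb1 : 1 ≤ b) (hbm : b ≤ m)
    (H0 : Finset (Fin m)) (hcard : H0.card = m0)
    (p : Fin m → Ω → ℝ) (hmeas : ∀ i, Measurable (p i))
    (hsuper : ∀ i ∈ H0, ∀ t ∈ Set.Icc (0:ℝ) 1, P {ω | p i ω ≤ t} ≤ ENNReal.ofReal t)
    (τ : ℕ → ℝ) (hτ0 : τ 0 = 0)
    (hτmono : ∀ k l, k ≤ l → l ≤ m → τ k ≤ τ l)
    (hτmem : ∀ l ≤ m, τ l ∈ Set.Icc (0:ℝ) 1)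
    (d : ℕ → ℕ) (hdpos : ∀ l, 1 ≤ l → 0 < d l)
    (hdmono : ∀ k l, 1 ≤ k → k ≤ l → d k ≤ d l)
    (ltil : Ω → ℕ) (hltilmeas : Measurable ltil) :
    (∑ l ∈ Finset.Icc 1 b,
        (P {ω | d l ≤ (H0.filter (fun i => p i ω ≤ τ l)).card ∧ ltil ω = l}).toReal
        ≤ (m0 : ℝ) * ∑ l ∈ Finset.Icc 1 b,
            ((∫ ω, ((H0.filter (fun i => p i ω ≤ τ l)).card : ℝ) ∂P)
              - ∫ ω, ((H0.filter (fun i => p i ω ≤ τ (l - 1))).card : ℝ) ∂P)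
              / ((m0 : ℝ) * d l))
    ∧ (∑ l ∈ Finset.Icc 1 b,
        (P {ω | d l ≤ (H0.filter (fun i => p i ω ≤ τ l)).card ∧ ltil ω = l}).toReal
        ≤ (m0 : ℝ) * ∑ l ∈ Finset.Icc 1 b, (τ l - τ (l - 1)) / d l) := by
  classical
  set V : ℕ → Ω → ℝ := fun l ω => ((H0.filter (fun i => p i ω ≤ τ l)).card : ℝ) with hV
  -- m0 = 0 case
  rcases Nat.eq_zero_or_pos m0 with hm0 | hm0
  · have hempty : ∀ l ∈ Finset.Icc 1 b,
        {ω | d l ≤ (H0.filter (fun i => p i ω ≤ τ l)).card ∧ ltil ω = l} = (∅ : Set Ω) := by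
      intro l hl
      rw [Finset.mem_Icc] at hl
      ext ω
      simp only [Set.mem_setOf_eq, Set.mem_empty_iff_false, iff_false, not_and]
      intro hd
      exfalso
      have h1 : (H0.filter (fun i => p i ω ≤ τ l)).card ≤ H0.card :=
        Finset.card_le_card (Finset.filter_subset _ _)
      have := hdpos l hl.1
      omega
    have hLHS : (∑ l ∈ Finset.Icc 1 b,
        (P {ω | d l ≤ (H0.filter (fun i => p i ω ≤ τ l)).card ∧ ltil ω = l}).toReal) = 0 := by
      apply Finset.sum_eq_zero
      intro l hl
      rw [hempty l hl]
      simp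
    rw [hLHS, hm0]
    norm_num
  -- basic facts about V
  have hsetmeas : ∀ i l, MeasurableSet {ω | p i ω ≤ τ l} := fun i l =>
    (hmeas i) measurableSet_Iic
  have hVrepr : ∀ l, V l = fun ω => ∑ i ∈ H0, (if p i ω ≤ τ l then (1:ℝ) else 0) := by
    intro l
    funext ω
    show ((H0.filter (fun i => p i ω ≤ τ l)).card : ℝ) = _
    rw [Finset.card_filter]
    push_cast
    rfl
  have hVmeas : ∀ l, Measurable (V l) := by
    intro l
    rw [hVrepr]
    exact Finset.measurable_sum _ fun i _ =>
      Measurable.ite (hsetmeas i l) measurable_const measurable_const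
  have hVnonneg : ∀ l ω, 0 ≤ V l ω := fun l ω => Nat.cast_nonneg _
  have hVle : ∀ l ω, V l ω ≤ (m0 : ℝ) := by
    intro l ω
    have h := Finset.card_le_card (Finset.filter_subset (fun i => p i ω ≤ τ l) H0)
    rw [hcard] at h
    show ((H0.filter (fun i => p i ω ≤ τ l)).card : ℝ) ≤ (m0 : ℝ)
    exact_mod_cast h
  have hVint : ∀ l, Integrable (V l) P := by
    intro l
    refine (integrable_const (m0 : ℝ)).mono' (hVmeas l).aestronglyMeasurable ?_
    filter_upwards with ω
    rw [Real.norm_eq_abs, abs_of_nonneg (hVnonneg l ω)]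
    exact hVle l ω
  have hVmono : ∀ k l ω, k ≤ l → l ≤ m → V k ω ≤ V l ω := by
    intro k l ω hkl hlm
    have : (H0.filter (fun i => p i ω ≤ τ k)) ⊆ (H0.filter (fun i => p i ω ≤ τ l)) :=
      by
        intro i hi
        rw [Finset.mem_filter] at hi ⊢
        exact ⟨hi.1, le_trans hi.2 (hτmono k l hkl hlm)⟩
    show ((H0.filter (fun i => p i ω ≤ τ k)).card : ℝ) ≤ ((H0.filter (fun i => p i ω ≤ τ l)).card : ℝ)
    exact_mod_cast Finset.card_le_card this
  -- expectation formulas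
  have hEV : ∀ l, ∫ ω, V l ω ∂P = ∑ i ∈ H0, (P {ω | p i ω ≤ τ l}).toReal := by
    intro l
    rw [hVrepr, integral_finset_sum]
    · refine Finset.sum_congr rfl fun i _ => ?_
      have : (fun ω => if p i ω ≤ τ l then (1:ℝ) else 0)
          = Set.indicator {ω | p i ω ≤ τ l} 1 := by
        funext ω
        simp [Set.indicator_apply]
      rw [this, integral_indicator_one (hsetmeas i l)]
      rfl
    · intro i _
      have : (fun ω => if p i ω ≤ τ l then (1:ℝ) else 0)
          = Set.indicator {ω | p i ω ≤ τ l} 1 := by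
        funext ω
        simp [Set.indicator_apply]
      rw [this]
      exact (integrable_const (1:ℝ)).indicator (hsetmeas i l)
  have hEVle : ∀ l ≤ m, ∫ ω, V l ω ∂P ≤ (m0 : ℝ) * τ l := by
    intro l hlm
    rw [hEV l]
    have hτl := hτmem l hlm
    calc ∑ i ∈ H0, (P {ω | p i ω ≤ τ l}).toReal
        ≤ ∑ i ∈ H0, τ l := by
          refine Finset.sum_le_sum fun i hi => ?_
          exact ENNReal.toReal_le_of_le_ofReal hτl.1 (hsuper i hi (τ l) hτl)
      _ = (m0 : ℝ) * τ l := by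
          rw [Finset.sum_const, hcard, nsmul_eq_mul]
  have hEV0 : ∫ ω, V 0 ω ∂P = 0 := by
    rw [hEV 0]
    apply Finset.sum_eq_zero
    intro i hi
    have h1 := hsuper i hi (τ 0) (hτmem 0 (by omega))
    rw [hτ0] at h1
    simp only [ENNReal.ofReal_zero, le_zero_iff] at h1
    rw [hτ0, h1, ENNReal.toReal_zero]
  -- a.e. V 0 = 0
  have hV0ae : ∀ᵐ ω ∂P, V 0 ω = 0 := by
    have hU : P (⋃ i ∈ (H0 : Set (Fin m)), {ω | p i ω ≤ τ 0}) = 0 := by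
      refine (measure_biUnion_null_iff H0.countable_toSet).mpr fun i hi => ?_
      have h1 := hsuper i hi (τ 0) (hτmem 0 (by omega))
      rw [hτ0] at h1
      simpa [hτ0] using h1
    have := (measure_eq_zero_iff_ae_notMem).mp hU
    filter_upwards [this] with ω hω
    simp only [Set.mem_iUnion, Set.mem_setOf_eq, not_exists] at hω
    have : H0.filter (fun i => p i ω ≤ τ 0) = ∅ := by
      apply Finset.filter_eq_empty_iff.mpr
      intro i hi
      exact hω i hi
    show ((H0.filter (fun i => p i ω ≤ τ 0)).card : ℝ) = 0
    rw [this]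
    simp
  -- the sets
  set A : ℕ → Set Ω := fun l =>
    {ω | d l ≤ (H0.filter (fun i => p i ω ≤ τ l)).card ∧ ltil ω = l} with hA
  have hAmeas : ∀ l, MeasurableSet (A l) := by
    intro l
    have heq : A l = V l ⁻¹' (Set.Ici (d l : ℝ)) ∩ ltil ⁻¹' {l} := by
      ext ω
      simp only [hA, Set.mem_setOf_eq, Set.mem_inter_iff, Set.mem_preimage, Set.mem_Ici,
        Set.mem_singleton_iff, hV, Nat.cast_le]
    rw [heq]
    exact ((hVmeas l) measurableSet_Ici).inter (hltilmeas (measurableSet_singleton l))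
  -- pointwise bound
  set W : Ω → ℝ := fun ω => ∑ k ∈ Finset.Icc 1 b, (V k ω - V (k-1) ω) / d k with hW
  have hincnn : ∀ k ω, 1 ≤ k → k ≤ b → 0 ≤ (V k ω - V (k-1) ω) / d k := by
    intro k ω hk1 hkb
    apply div_nonneg _ (Nat.cast_nonneg _)
    have := hVmono (k-1) k ω (by omega) (by omega)
    linarith
  have hpoint : ∀ ω, V 0 ω = 0 →
      (∑ l ∈ Finset.Icc 1 b, (A l).indicator (fun _ => (1:ℝ)) ω) ≤ W ω := by
    intro ω hω0
    have hWnn : (0:ℝ) ≤ W ω := by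
      apply Finset.sum_nonneg
      intro k hk
      rw [Finset.mem_Icc] at hk
      exact hincnn k ω hk.1 hk.2
    by_cases hex : ∃ l ∈ Finset.Icc 1 b, ω ∈ A l
    · obtain ⟨l, hl, hωl⟩ := hex
      rw [Finset.mem_Icc] at hl
      have hsum1 : (∑ l' ∈ Finset.Icc 1 b, (A l').indicator (fun _ => (1:ℝ)) ω) = 1 := by
        rw [Finset.sum_eq_single_of_mem l (Finset.mem_Icc.mpr hl)]
        · simp [Set.indicator_of_mem hωl]
        · intro l' _ hne
          apply Set.indicator_of_notMem
          intro hωl'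
          exact hne (hωl'.2.symm.trans hωl.2)
      rw [hsum1]
      -- 1 ≤ W ω
      have hdl : (0:ℝ) < d l := by exact_mod_cast hdpos l hl.1
      have step1 : ∑ k ∈ Finset.Icc 1 l, (V k ω - V (k-1) ω) / d l ≤
          ∑ k ∈ Finset.Icc 1 l, (V k ω - V (k-1) ω) / d k := by
        refine Finset.sum_le_sum fun k hk => ?_
        rw [Finset.mem_Icc] at hk
        have hdk : (0:ℝ) < d k := by exact_mod_cast hdpos k hk.1
        have hdkl : (d k : ℝ) ≤ d l := by exact_mod_cast hdmono k l hk.1 hk.2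
        have hnn : 0 ≤ V k ω - V (k-1) ω := by
          have := hVmono (k-1) k ω (by omega) (by omega)
          linarith
        rw [div_eq_mul_inv, div_eq_mul_inv]
        exact mul_le_mul_of_nonneg_left (inv_anti₀ hdk hdkl) hnn
      have step2 : ∑ k ∈ Finset.Icc 1 l, (V k ω - V (k-1) ω) / d k ≤ W ω := by
        refine Finset.sum_le_sum_of_subset_of_nonneg ?_ ?_
        · exact Finset.Icc_subset_Icc le_rfl hl.2
        · intro k hk _
          rw [Finset.mem_Icc] at hk
          exact hincnn k ω hk.1 hk.2
      have htel : ∑ k ∈ Finset.Icc 1 l, (V k ω - V (k-1) ω) = V l ω - V 0 ω := by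
        rw [← Finset.Ico_add_one_right_eq_Icc, Finset.sum_Ico_eq_sum_range]
        have : ∀ i, V (1 + i) ω - V (1 + i - 1) ω = V (i + 1) ω - V i ω := by
          intro i
          congr 2 <;> omega
        rw [Finset.sum_congr rfl (fun i _ => this i)]
        exact Finset.sum_range_sub (fun i => V i ω) l
      have hVl : (d l : ℝ) ≤ V l ω := by
        have := hωl.1
        simp only [hV]
        exact_mod_cast this
      have h1le : (1:ℝ) ≤ ∑ k ∈ Finset.Icc 1 l, (V k ω - V (k-1) ω) / d l := by
        rw [← Finset.sum_div, htel, hω0, sub_zero]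
        rw [le_div_iff₀ hdl, one_mul]
        exact hVl
      linarith
    · have : (∑ l ∈ Finset.Icc 1 b, (A l).indicator (fun _ => (1:ℝ)) ω) = 0 := by
        apply Finset.sum_eq_zero
        intro l hl
        exact Set.indicator_of_notMem (fun hωl => hex ⟨l, hl, hωl⟩) _
      rw [this]
      exact hWnn
  -- integrate
  have hindint : ∀ l, Integrable ((A l).indicator (fun _ => (1:ℝ))) P := fun l =>
    (integrable_const (1:ℝ)).indicator (hAmeas l)
  have hWint : Integrable W P := by
    apply integrable_finset_sum
    intro k _
    exact ((hVint k).sub (hVint (k-1))).div_const _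
  have hmain : (∑ l ∈ Finset.Icc 1 b, (P (A l)).toReal) ≤
      ∑ k ∈ Finset.Icc 1 b, ((∫ ω, V k ω ∂P) - ∫ ω, V (k-1) ω ∂P) / d k := by
    have h1 : (∑ l ∈ Finset.Icc 1 b, (P (A l)).toReal)
        = ∫ ω, ∑ l ∈ Finset.Icc 1 b, (A l).indicator (fun _ => (1:ℝ)) ω ∂P := by
      rw [integral_finset_sum _ (fun l _ => hindint l)]
      refine Finset.sum_congr rfl fun l _ => ?_
      rw [← Measure.real_def, ← integral_indicator_one (hAmeas l)]
      rfl
    have h2 : ∫ ω, ∑ l ∈ Finset.Icc 1 b, (A l).indicator (fun _ => (1:ℝ)) ω ∂P ≤ ∫ ω, W ω ∂P := by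
      refine integral_mono_ae (integrable_finset_sum _ (fun l _ => hindint l)) hWint ?_
      filter_upwards [hV0ae] with ω hω0
      exact hpoint ω hω0
    have h3 : ∫ ω, W ω ∂P = ∑ k ∈ Finset.Icc 1 b, ((∫ ω, V k ω ∂P) - ∫ ω, V (k-1) ω ∂P) / d k := by
      calc ∫ ω, W ω ∂P
          = ∑ k ∈ Finset.Icc 1 b, ∫ ω, (V k ω - V (k-1) ω) / (d k : ℝ) ∂P :=
            integral_finset_sum _ (fun k _ => ((hVint k).sub (hVint (k-1))).div_const _)
        _ = ∑ k ∈ Finset.Icc 1 b, ((∫ ω, V k ω ∂P) - ∫ ω, V (k-1) ω ∂P) / d k := by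
            refine Finset.sum_congr rfl fun k _ => ?_
            rw [integral_div, integral_sub (hVint k) (hVint (k-1))]
    rw [h1, ← h3]
    exact h2
  constructor
  · -- first bound
    have hRHS : (m0 : ℝ) * ∑ l ∈ Finset.Icc 1 b,
        ((∫ ω, V l ω ∂P) - ∫ ω, V (l-1) ω ∂P) / ((m0 : ℝ) * d l)
        = ∑ l ∈ Finset.Icc 1 b, ((∫ ω, V l ω ∂P) - ∫ ω, V (l-1) ω ∂P) / d l := by
      rw [Finset.mul_sum]
      refine Finset.sum_congr rfl fun l hl => ?_
      rw [Finset.mem_Icc] at hl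
      have hdl : (d l : ℝ) ≠ 0 := by
        have := hdpos l hl.1
        positivity
      have hm0' : (m0 : ℝ) ≠ 0 := by positivity
      field_simp
    exact hRHS ▸ hmain
  · -- second bound
    have habel : ∑ k ∈ Finset.Icc 1 b, ((∫ ω, V k ω ∂P) - ∫ ω, V (k-1) ω ∂P) / d k ≤
        ∑ k ∈ Finset.Icc 1 b, ((m0:ℝ) * τ k - (m0:ℝ) * τ (k-1)) / d k := by
      have := abel_ineq (fun k => ∫ ω, V k ω ∂P) (fun k => (m0:ℝ) * τ k)
        (fun k => ((d k : ℝ))⁻¹) b hEV0 (by simp [hτ0])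
        (fun k hk1 hkb => hEVle k (le_trans hkb hbm))
        (by positivity)
        (fun k hk1 hkb => by
          have h1 : (0:ℝ) < d k := by exact_mod_cast hdpos k hk1
          have h2 : (d k : ℝ) ≤ d (k+1) := by exact_mod_cast hdmono k (k+1) hk1 (by omega)
          exact inv_anti₀ h1 h2)
      simpa [div_eq_mul_inv] using this
    have heq : ∑ k ∈ Finset.Icc 1 b, ((m0:ℝ) * τ k - (m0:ℝ) * τ (k-1)) / d k
        = (m0 : ℝ) * ∑ l ∈ Finset.Icc 1 b, (τ l - τ (l - 1)) / d l := by
      rw [Finset.mul_sum]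
      refine Finset.sum_congr rfl fun l _ => ?_
      ring
    calc (∑ l ∈ Finset.Icc 1 b, (P (A l)).toReal)
        ≤ ∑ k ∈ Finset.Icc 1 b, ((∫ ω, V k ω ∂P) - ∫ ω, V (k-1) ω ∂P) / d k := hmain
      _ ≤ ∑ k ∈ Finset.Icc 1 b, ((m0:ℝ) * τ k - (m0:ℝ) * τ (k-1)) / d k := habel
      _ = (m0 : ℝ) * ∑ l ∈ Finset.Icc 1 b, (τ l - τ (l - 1)) / d l := heq
end

section
/- If the adaptive bounding device satisfies B̃_m(t,k,ℓ) = sup_{k ≤ k' ≤ ℓ} sup_{0 ≤ u ≤ m−ℓ+k'} B⁰_m(t,k',u), and the step-up procedure with the adaptive critical values τ̃_ℓ = max{t : B̃_m(t, ⌊αℓ⌋+1, ℓ) ≤ ζ} rejects ℓ̂ hypotheses with k̂ = V_m(τ̃_{ℓ̂}) ≥ ⌊α ℓ̂⌋ + 1 false rejections, then B⁰_m(τ̃_{ℓ̂}, k̂, m_0) ≤ ζ (using m_0 ≤ m − ℓ̂ + k̂), and consequently {FDP_m(τ̃_{ℓ̂}) > α} ⊆ {q_(k̂) ≤ ν⁰_{k̂},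 k̂ ≥ 1}, where ν⁰_k = max{t : B⁰_m(t,k,m_0) ≤ ζ} and q_(k) is the k-th smallest null p-value. -/
/-- Adaptive k-FWE critical values and FDP control (key step of Proposition 3.2):
if the adaptive critical values `τ̃` satisfy
`B̃_m(τ̃_ℓ, ⌊αℓ⌋+1, ℓ) = sup_{⌊αℓ⌋+1 ≤ k' ≤ ℓ} sup_{u ≤ m−ℓ+k'} B⁰_m(τ̃_ℓ,k',u) ≤ ζ`
and the step-up procedure rejects `ℓ̂` hypotheses with `k̂ = V_m(τ̃_ℓ̂)` false
rejections, then `k̂ ≥ ⌊αℓ̂⌋+1` implies `B⁰_m(τ̃_ℓ̂, k̂, m₀) ≤ ζ`, and consequently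
`FDP_m(τ̃_ℓ̂) > α` implies `q_(k̂) ≤ ν⁰_k̂` and `k̂ ≥ 1`, where
`ν⁰_k = max{t : B⁰_m(t,k,m₀) ≤ ζ}` and `q` is the sorted vector of null p-values. -/
theorem stmt_10 (m m0 : ℕ) (H0 : Finset (Fin m)) (hcard : H0.card = m0)
    (p : Fin m → ℝ) (α ζ : ℝ) (hα : α ∈ Set.Ioo (0:ℝ) 1) (hζ : ζ ∈ Set.Ioo (0:ℝ) 1)
    (B0 : ℝ → ℕ → ℕ → ℝ)
    (hB0k : ∀ (t : ℝ) (k k' u : ℕ), k ≤ k' → B0 t k' u ≤ B0 t k u)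
    (hB0t : ∀ (t t' : ℝ) (k u : ℕ), t ≤ t' → B0 t k u ≤ B0 t' k u)
    (τ : ℕ → ℝ)
    (hτadapt : ∀ l : ℕ, 1 ≤ l → l ≤ m → ∀ k' u : ℕ,
      ⌊α * (l : ℝ)⌋ + 1 ≤ (k' : ℤ) → k' ≤ l → u ≤ m - l + k' → B0 (τ l) k' u ≤ ζ)
    (ν0 : ℕ → ℝ)
    (hν0mem : ∀ k, B0 (ν0 k) k m0 ≤ ζ)
    (hν0max : ∀ (k : ℕ) (t : ℝ), B0 t k m0 ≤ ζ → t ≤ ν0 k)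
    (q : Fin m0 → ℝ) (hqmono : Monotone q)
    (σ : Fin m0 ≃ {i // i ∈ H0}) (hqp : ∀ j, q j = p (σ j))
    (lhat : ℕ) (hlm : lhat ≤ m)
    (hswitch : (Finset.univ.filter (fun i => p i ≤ τ lhat)).card = lhat) :
    (⌊α * (lhat : ℝ)⌋ + 1 ≤ ((H0.filter (fun i => p i ≤ τ lhat)).card : ℤ) →
      B0 (τ lhat) ((H0.filter (fun i => p i ≤ τ lhat)).card) m0 ≤ ζ)
    ∧ (((H0.filter (fun i => p i ≤ τ lhat)).card : ℝ) /
          max ((Finset.univ.filter (fun i => p i ≤ τ lhat)).card : ℝ) 1 > α →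
        1 ≤ (H0.filter (fun i => p i ≤ τ lhat)).card
        ∧ (H0.filter (fun i => p i ≤ τ lhat)).card ≤ m0
        ∧ ∀ j : Fin m0, (j : ℕ) + 1 = (H0.filter (fun i => p i ≤ τ lhat)).card →
            q j ≤ ν0 ((H0.filter (fun i => p i ≤ τ lhat)).card)) := by
  set khat := (H0.filter (fun i => p i ≤ τ lhat)).card with hkhat
  have hsub : H0.filter (fun i => p i ≤ τ lhat) ⊆ Finset.univ.filter (fun i => p i ≤ τ lhat) := by
    intro i hi
    simp only [Finset.mem_filter] at hi ⊢
    exact ⟨Finset.mem_univ i, hi.2⟩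
  have hkl : khat ≤ lhat := hswitch ▸ Finset.card_le_card hsub
  have hkm0 : khat ≤ m0 := hcard ▸ Finset.card_filter_le _ _
  -- m0 ≤ m - lhat + khat
  have hm0bound : m0 ≤ m - lhat + khat := by
    have h1 : (H0.filter (fun i => ¬ p i ≤ τ lhat)).card ≤ m - lhat := by
      have hsub2 : H0.filter (fun i => ¬ p i ≤ τ lhat) ⊆
          Finset.univ.filter (fun i => ¬ p i ≤ τ lhat) := by
        intro i hi
        simp only [Finset.mem_filter] at hi ⊢
        exact ⟨Finset.mem_univ i, hi.2⟩
      have h2 : (Finset.univ.filter (fun i => p i ≤ τ lhat)).card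
          + (Finset.univ.filter (fun i => ¬ p i ≤ τ lhat)).card
          = (Finset.univ : Finset (Fin m)).card :=
        Finset.card_filter_add_card_filter_not _
      rw [hswitch, Finset.card_univ, Fintype.card_fin] at h2
      have := Finset.card_le_card hsub2
      omega
    have h3 : khat + (H0.filter (fun i => ¬ p i ≤ τ lhat)).card = H0.card :=
      Finset.card_filter_add_card_filter_not _
    omega
  -- part 1
  have part1 : ⌊α * (lhat : ℝ)⌋ + 1 ≤ (khat : ℤ) → B0 (τ lhat) khat m0 ≤ ζ := by
    intro hk
    have hfloor : (0:ℤ) ≤ ⌊α * (lhat : ℝ)⌋ :=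
      Int.floor_nonneg.2 (mul_nonneg (le_of_lt hα.1) (Nat.cast_nonneg _))
    have hk1 : 1 ≤ khat := by exact_mod_cast (by omega : (1:ℤ) ≤ (khat : ℤ))
    have hl1 : 1 ≤ lhat := le_trans hk1 hkl
    exact hτadapt lhat hl1 hlm khat m0 hk hkl hm0bound
  refine ⟨part1, ?_⟩
  intro hfdp
  -- lhat ≥ 1
  have hl1 : 1 ≤ lhat := by
    by_contra h
    have hl0 : lhat = 0 := by omega
    have hk0 : khat = 0 := by omega
    rw [hk0] at hfdp
    norm_num at hfdp
    exact absurd hfdp (not_lt.2 (le_of_lt hα.1))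
  have hlpos : (0:ℝ) < (lhat : ℝ) := by exact_mod_cast hl1
  have hmax : max (((Finset.univ.filter (fun i => p i ≤ τ lhat)).card : ℕ) : ℝ) 1
      = (lhat : ℝ) := by
    rw [hswitch]
    exact max_eq_left (by exact_mod_cast hl1)
  rw [hmax] at hfdp
  have hkgt : α * (lhat : ℝ) < (khat : ℝ) := (lt_div_iff₀ hlpos).1 hfdp
  have hkint : ⌊α * (lhat : ℝ)⌋ + 1 ≤ (khat : ℤ) := by
    have : ⌊α * (lhat : ℝ)⌋ < (khat : ℤ) := by
      apply Int.floor_lt.2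
      exact_mod_cast hkgt
    omega
  have hk1 : 1 ≤ khat := by
    have hfloor : (0:ℤ) ≤ ⌊α * (lhat : ℝ)⌋ :=
      Int.floor_nonneg.2 (mul_nonneg (le_of_lt hα.1) (Nat.cast_nonneg _))
    exact_mod_cast (by omega : (1:ℤ) ≤ (khat : ℤ))
  have hBζ : B0 (τ lhat) khat m0 ≤ ζ := part1 hkint
  have hτν : τ lhat ≤ ν0 khat := hν0max khat (τ lhat) hBζ
  refine ⟨hk1, hkm0, ?_⟩
  intro j hj
  -- q j ≤ τ lhat
  have hqj : q j ≤ τ lhat := by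
    by_contra hgt
    push_neg at hgt
    -- all j' with q j' ≤ τ lhat satisfy j' < j
    set T := Finset.univ.filter (fun j' : Fin m0 => q j' ≤ τ lhat) with hT
    have hTsub : T ⊆ Finset.Iio j := by
      intro j' hj'
      simp only [hT, Finset.mem_filter] at hj'
      rw [Finset.mem_Iio]
      by_contra hge
      push_neg at hge
      exact absurd (le_trans (hqmono hge) hj'.2) (not_le.2 hgt)
    have hm0pos : 0 < m0 := lt_of_lt_of_le hk1 hkm0
    have hTcard : khat ≤ T.card := by
      set f : Fin m → Fin m0 := fun i =>
        if h : i ∈ H0 then σ.symm ⟨i, h⟩ else ⟨0, hm0pos⟩ with hf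
      apply Finset.card_le_card_of_injOn f
      · intro i hi
        rw [Finset.mem_coe, Finset.mem_filter] at hi
        simp only [hf, hi.1, dif_pos, hT, Finset.mem_coe, Finset.mem_filter, Finset.mem_univ, true_and]
        rw [hqp]
        simpa using hi.2
      · intro a ha b hb hab
        rw [Finset.coe_filter, Set.mem_setOf_eq] at ha hb
        simp only [hf, ha.1, hb.1, dif_pos] at hab
        have := σ.symm.injective hab
        exact Subtype.ext_iff.1 this
    have hIio : (Finset.Iio j).card = (j : ℕ) := by
      simp [Fin.card_Iio]
    have := Finset.card_le_card hTsub
    omega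
  exact le_trans hqj hτν
end

section
/- Lehmann–Romano control under Simes: if Simes's inequality P(∪_{k=1}^{m_0} {q_(k) ≤ ζ k/m_0}) ≤ ζ holds for the ordered null p-values q_(1) ≤ ... ≤ q_(m_0), then the step-up (or step-down) procedure with the Lehmann–Romano critical values τ̃_ℓ = ζ(⌊αℓ⌋+1)/(m − ℓ + ⌊αℓ⌋ + 1) satisfies P(FDP_m(τ̃_{ℓ̂}) > α) ≤ ζ. -/
open MeasureTheory

/-- Lehmann–Romano control under Simes: if Simes's inequality
`P(∪_{k=1}^{m₀} {q_(k) ≤ ζ k/m₀}) ≤ ζ` holds for the ordered null p-values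
(expressed via `{q_(k) ≤ s} = {V_m(s) ≥ k}`), then the step-up (or step-down)
procedure with the Lehmann–Romano critical values
`τ̃_ℓ = ζ(⌊αℓ⌋+1)/(m − ℓ + ⌊αℓ⌋ + 1)` satisfies `P(FDP_m(τ̃_ℓ̂) > α) ≤ ζ`. -/
theorem stmt_11 {Ω : Type*} [MeasurableSpace Ω] (P : Measure Ω) [IsProbabilityMeasure P]
    (m m0 : ℕ) (hm : 1 ≤ m) (H0 : Finset (Fin m)) (hcard : H0.card = m0)
    (p : Fin m → Ω → ℝ) (hmeas : ∀ i, Measurable (p i))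
    (α ζ : ℝ) (hα : α ∈ Set.Ioo (0:ℝ) 1) (hζ : ζ ∈ Set.Ioo (0:ℝ) 1)
    (τ : ℕ → ℝ)
    (hτ : ∀ l : ℕ, τ l = ζ * ((⌊α * (l : ℝ)⌋ : ℝ) + 1) /
      ((m : ℝ) - (l : ℝ) + (⌊α * (l : ℝ)⌋ : ℝ) + 1))
    (lhat : Ω → ℕ) (hlm : ∀ ω, lhat ω ≤ m)
    (hswitch : ∀ ω, (Finset.univ.filter (fun i => p i ω ≤ τ (lhat ω))).card = lhat ω)
    (hSimes : P (⋃ k ∈ Finset.Icc 1 m0,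
        {ω | k ≤ (H0.filter (fun i => p i ω ≤ ζ * (k : ℝ) / (m0 : ℝ))).card})
      ≤ ENNReal.ofReal ζ) :
    P {ω | ((H0.filter (fun i => p i ω ≤ τ (lhat ω))).card : ℝ) /
        max ((lhat ω : ℕ) : ℝ) 1 > α} ≤ ENNReal.ofReal ζ := by
  refine le_trans (measure_mono ?_) hSimes
  intro ω hω
  simp only [Set.mem_setOf_eq] at hω
  set l := lhat ω with hl
  set V := (H0.filter (fun i => p i ω ≤ τ l)).card with hVdef
  have hswitch' : (Finset.univ.filter (fun i => p i ω ≤ τ l)).card = l := hswitch ω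
  have hVl : V ≤ l := by
    rw [← hswitch']
    exact Finset.card_le_card
      (Finset.filter_subset_filter _ (Finset.subset_univ H0))
  have hmaxpos : (0:ℝ) < max ((l:ℕ):ℝ) 1 := lt_of_lt_of_le one_pos (le_max_right _ _)
  have hVpos : (0:ℝ) < (V:ℝ) := by
    have hα0 := hα.1
    have := (lt_div_iff₀ hmaxpos).mp hω
    nlinarith
  have hV1 : 1 ≤ V := by exact_mod_cast Nat.cast_pos.mp hVpos
  have hl1 : 1 ≤ l := le_trans hV1 hVl
  have hlR : (1:ℝ) ≤ (l:ℝ) := by exact_mod_cast hl1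
  have hmaxeq : max ((l:ℕ):ℝ) 1 = (l:ℝ) := max_eq_left hlR
  rw [hmaxeq] at hω
  have hlpos : (0:ℝ) < (l:ℝ) := lt_of_lt_of_le one_pos hlR
  have hαV : α * (l:ℝ) < (V:ℝ) := by
    have := (lt_div_iff₀ hlpos).mp hω
    linarith
  have hf0 : (0:ℤ) ≤ ⌊α * (l:ℝ)⌋ := Int.floor_nonneg.mpr (mul_nonneg hα.1.le (Nat.cast_nonneg l))
  have hfV : (⌊α * (l:ℝ)⌋ : ℝ) + 1 ≤ (V:ℝ) := by
    have h1 : (⌊α * (l:ℝ)⌋ : ℝ) < (V:ℝ) := lt_of_le_of_lt (Int.floor_le _) hαV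
    have h2 : ⌊α * (l:ℝ)⌋ < (V:ℤ) := by exact_mod_cast h1
    have h3 : ⌊α * (l:ℝ)⌋ + 1 ≤ (V:ℤ) := h2
    exact_mod_cast h3
  have hVm0 : V ≤ m0 := hcard ▸ Finset.card_le_card (Finset.filter_subset _ _)
  have hm01 : 1 ≤ m0 := le_trans hV1 hVm0
  have hml : l ≤ m := hlm ω
  have hkey : m0 + l ≤ m + V := by
    have e1 : V + (H0.filter (fun i => ¬ p i ω ≤ τ l)).card = m0 := by
      rw [hVdef, Finset.card_filter_add_card_filter_not, hcard]
    have e2 : l + (Finset.univ.filter (fun i => ¬ p i ω ≤ τ l)).card = m := by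
      have h := Finset.card_filter_add_card_filter_not
        (s := (Finset.univ : Finset (Fin m))) (p := fun i => p i ω ≤ τ l)
      rw [hswitch', Finset.card_univ, Fintype.card_fin] at h
      exact h
    have h3 : (H0.filter (fun i => ¬ p i ω ≤ τ l)).card ≤
        (Finset.univ.filter (fun i => ¬ p i ω ≤ τ l)).card :=
      Finset.card_le_card (Finset.filter_subset_filter _ (Finset.subset_univ H0))
    omega
  have hkeyR : (m0:ℝ) ≤ (m:ℝ) - (l:ℝ) + (V:ℝ) := by
    have : (m0:ℝ) + (l:ℝ) ≤ (m:ℝ) + (V:ℝ) := by exact_mod_cast hkey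
    linarith
  have hmlR : (0:ℝ) ≤ (m:ℝ) - (l:ℝ) := by
    have : (l:ℝ) ≤ (m:ℝ) := by exact_mod_cast hml
    linarith
  have hm0R : (0:ℝ) < (m0:ℝ) := by exact_mod_cast hm01
  have hτζ : τ l ≤ ζ * (V:ℝ) / (m0:ℝ) := by
    rw [hτ l]
    set f : ℝ := (⌊α * (l:ℝ)⌋ : ℝ) with hf
    have hfR : (0:ℝ) ≤ f := by rw [hf]; exact_mod_cast hf0
    have hD : (0:ℝ) < (m:ℝ) - (l:ℝ) + f + 1 := by linarith
    rw [div_le_div_iff₀ hD hm0R]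
    have hζ0 := hζ.1.le
    nlinarith [mul_le_mul_of_nonneg_left hkeyR
        (mul_nonneg hζ0 (by linarith : (0:ℝ) ≤ f + 1)),
      mul_le_mul_of_nonneg_right hfV (mul_nonneg hζ0 hmlR),
      mul_le_mul_of_nonneg_right hfV hζ0]
  simp only [Set.mem_iUnion, Set.mem_setOf_eq, Finset.mem_Icc]
  refine ⟨V, ⟨hV1, hVm0⟩, ?_⟩
  refine le_trans (le_of_eq rfl) (Finset.card_le_card ?_)
  intro i hi
  simp only [Finset.mem_filter] at hi ⊢
  exact ⟨hi.1, le_trans hi.2 hτζ⟩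
end

section
/- Asymptotic validity of BH under weak dependence (Lemma 4.1): Let Ĝ_m(t) = R_m(t)/m and Ĝ_{0,m}(t) = V_m(t)/m_0. Suppose m_0/m → π_0 ∈ (0,1), sup_t |Ĝ_m(t) − G(t)| → 0 in probability for a continuous G, sup_t |Ĝ_{0,m}(t) − t| → 0 in probability, and there exists t ∈ (0,1) with G(t) > t/α. Then for the BH procedure (step-up with τ_ℓ = αℓ/m) we have P(FDP_m(τ_{ℓ̂}) > α) → 0 as m → ∞. -/
open MeasureTheory Filter

set_option maxHeartbeats 2000000 in
/-- Asymptotic validity of the BH procedure under weak dependence (Lemma 4.1):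
if `m₀/m → π₀ ∈ (0,1)`, `sup_t |Ĝ_m(t) − G(t)| → 0` in probability for a
continuous `G`, `sup_t |Ĝ_{0,m}(t) − t| → 0` in probability, and `G(t) > t/α`
for some `t ∈ (0,1)`, then the BH procedure (step-up with `τ_ℓ = αℓ/m`)
satisfies `P(FDP_m(τ_ℓ̂) > α) → 0`. -/
theorem stmt_13 (Ω : ℕ → Type*) [∀ n, MeasurableSpace (Ω n)]
    (P : ∀ n, Measure (Ω n)) [∀ n, IsProbabilityMeasure (P n)]
    (p : ∀ n, Fin n → Ω n → ℝ) (hmeas : ∀ n i, Measurable (p n i))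
    (H0 : ∀ n, Finset (Fin n)) (m0 : ℕ → ℕ) (hm0 : ∀ n, (H0 n).card = m0 n)
    (α π0 : ℝ) (hα : α ∈ Set.Ioo (0:ℝ) 1) (hπ0 : π0 ∈ Set.Ioo (0:ℝ) 1)
    (hconv : Tendsto (fun n => (m0 n : ℝ) / (n : ℝ)) atTop (nhds π0))
    (G : ℝ → ℝ) (hG : ContinuousOn G (Set.Icc 0 1))
    (hweakdep : ∀ ε > (0:ℝ), Tendsto (fun n =>
        P n {ω | ∃ t ∈ Set.Icc (0:ℝ) 1,
          ε < |((Finset.univ.filter (fun i => p n i ω ≤ t)).card : ℝ) / (n : ℝ) - G t|})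
        atTop (nhds 0))
    (hweakdep0 : ∀ ε > (0:ℝ), Tendsto (fun n =>
        P n {ω | ∃ t ∈ Set.Icc (0:ℝ) 1,
          ε < |(((H0 n).filter (fun i => p n i ω ≤ t)).card : ℝ) / (m0 n : ℝ) - t|})
        atTop (nhds 0))
    (hexists : ∃ t ∈ Set.Ioo (0:ℝ) 1, t / α < G t)
    (lhat : ∀ n, Ω n → ℕ) (hlm : ∀ n ω, lhat n ω ≤ n)
    (hswitch : ∀ n ω,
      (Finset.univ.filter (fun i => p n i ω ≤ α * (lhat n ω : ℝ) / (n : ℝ))).card = lhat n ω)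
    (hmax : ∀ n ω, ∀ l ≤ n,
      l ≤ (Finset.univ.filter (fun i => p n i ω ≤ α * (l : ℝ) / (n : ℝ))).card →
        l ≤ lhat n ω) :
    Tendsto (fun n =>
      P n {ω | α < (((H0 n).filter
            (fun i => p n i ω ≤ α * (lhat n ω : ℝ) / (n : ℝ))).card : ℝ) /
          max ((lhat n ω : ℕ) : ℝ) 1}) atTop (nhds 0) := by
  obtain ⟨hα0, hα1⟩ := hα
  obtain ⟨hπ00, hπ01⟩ := hπ0
  obtain ⟨t0, ⟨ht0pos, ht0lt1⟩, ht0⟩ := hexists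
  have ht0Icc : t0 ∈ Set.Icc (0:ℝ) 1 := ⟨ht0pos.le, ht0lt1.le⟩
  -- Step 0 : G t0 ≤ 1
  have hGle1 : G t0 ≤ 1 := by
    by_contra h
    push_neg at h
    have hε : (0:ℝ) < (G t0 - 1) / 2 := by linarith
    have h1 := (hweakdep _ hε).eventually_lt_const (by norm_num : (0:ENNReal) < 1)
    have h2 : ∀ᶠ n : ℕ in atTop, 1 ≤ n := eventually_ge_atTop 1
    obtain ⟨n, hn1, hn2⟩ := (h1.and h2).exists
    have hne : {ω | ∃ t ∈ Set.Icc (0:ℝ) 1,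
        (G t0 - 1) / 2 < |((Finset.univ.filter (fun i => p n i ω ≤ t)).card : ℝ) / (n : ℝ) - G t|}
        ≠ Set.univ := by
      intro hs
      rw [hs, measure_univ] at hn1
      exact lt_irrefl _ hn1
    obtain ⟨ω, hω⟩ := Set.ne_univ_iff_exists_notMem _ |>.mp hne
    simp only [Set.mem_setOf_eq] at hω
    push_neg at hω
    have hωt := hω t0 ht0Icc
    have hmpos : (0:ℝ) < n := by exact_mod_cast hn2
    have hcard : ((Finset.univ.filter (fun i => p n i ω ≤ t0)).card : ℝ) / (n:ℝ) ≤ 1 := by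
      rw [div_le_one hmpos]
      exact_mod_cast (Finset.card_filter_le _ _).trans (le_of_eq (by simp))
    have := abs_le.mp hωt
    linarith [this.1]
  have ht0α : t0 < α := by
    have h1 : t0 / α < 1 := lt_of_lt_of_le ht0 hGle1
    exact (div_lt_one hα0).mp h1
  obtain ⟨c, hcdef⟩ : ∃ c : ℝ, c = G t0 - t0 / α := ⟨_, rfl⟩
  have hc : 0 < c := by rw [hcdef]; linarith
  obtain ⟨ε, hεdef⟩ : ∃ ε : ℝ, ε = min (c/2) (t0 * (1 - π0) / (1 + π0)) := ⟨_, rfl⟩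
  have hε : 0 < ε := by
    rw [hεdef]
    exact lt_min (by linarith) (div_pos (mul_pos ht0pos (by linarith)) (by linarith))
  have hεc : ε ≤ c/2 := hεdef ▸ min_le_left _ _
  have hεt : ε ≤ t0 * (1 - π0) / (1 + π0) := hεdef ▸ min_le_right _ _
  have hA := hweakdep ε hε
  have hB := hweakdep0 ε hε
  -- eventual deterministic conditions
  have hev1 : ∀ᶠ n : ℕ in atTop, 2/c ≤ (n:ℝ) :=
    tendsto_natCast_atTop_atTop.eventually_ge_atTop (2/c)
  have hev2 : ∀ᶠ n : ℕ in atTop, (m0 n : ℝ) / (n:ℝ) < (1+π0)/2 :=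
    hconv.eventually_lt_const (by linarith)
  have hev3 : ∀ᶠ n : ℕ in atTop, 1 ≤ n := eventually_ge_atTop 1
  have key : ∀ᶠ n : ℕ in atTop,
      P n {ω | α < (((H0 n).filter
            (fun i => p n i ω ≤ α * (lhat n ω : ℝ) / (n : ℝ))).card : ℝ) /
          max ((lhat n ω : ℕ) : ℝ) 1} ≤
      P n {ω | ∃ t ∈ Set.Icc (0:ℝ) 1,
          ε < |((Finset.univ.filter (fun i => p n i ω ≤ t)).card : ℝ) / (n : ℝ) - G t|} +
      P n {ω | ∃ t ∈ Set.Icc (0:ℝ) 1,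
          ε < |(((H0 n).filter (fun i => p n i ω ≤ t)).card : ℝ) / (m0 n : ℝ) - t|} := by
    filter_upwards [hev1, hev2, hev3] with n hn1 hn2 hn3
    refine le_trans (measure_mono ?_) (measure_union_le _ _)
    intro ω hω
    by_contra hAB
    simp only [Set.mem_union, Set.mem_setOf_eq, not_or] at hAB
    push_neg at hAB
    obtain ⟨hGa, hGb⟩ := hAB
    simp only [Set.mem_setOf_eq] at hω
    have hm : (0:ℝ) < n := by exact_mod_cast hn3
    -- lower bound on lhat
    obtain ⟨L, hLdef⟩ : ∃ L : ℕ, L = ⌈(n:ℝ) * t0 / α⌉₊ := ⟨_, rfl⟩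
    have hL1 : (n:ℝ) * t0 / α ≤ L := hLdef ▸ Nat.le_ceil _
    have hL2 : (L:ℝ) < (n:ℝ) * t0 / α + 1 := by
      rw [hLdef]
      exact Nat.ceil_lt_add_one (div_nonneg (mul_nonneg hm.le ht0pos.le) hα0.le)
    have hLn : L ≤ n := by
      rw [hLdef, Nat.ceil_le, mul_div_assoc]
      nlinarith [(div_le_one hα0).mpr ht0α.le]
    have hcε : 1 ≤ (n:ℝ) * (c - ε) := by
      have h2c : 2 ≤ (n:ℝ) * c := by
        rw [div_le_iff₀ hc] at hn1
        linarith
      nlinarith [mul_le_mul_of_nonneg_left hεc hm.le]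
    have ht0L : t0 ≤ α * (L:ℝ) / (n:ℝ) := by
      rw [le_div_iff₀ hm]
      rw [div_le_iff₀ hα0] at hL1
      linarith
    have hsub : Finset.univ.filter (fun i => p n i ω ≤ t0) ⊆
        Finset.univ.filter (fun i => p n i ω ≤ α * (L:ℝ) / (n:ℝ)) := by
      intro i hi
      simp only [Finset.mem_filter] at hi ⊢
      exact ⟨hi.1, hi.2.trans ht0L⟩
    have hR0 : (n:ℝ) * (G t0 - ε) ≤
        ((Finset.univ.filter (fun i => p n i ω ≤ t0)).card : ℝ) := by
      have habs := abs_le.mp (hGa t0 ht0Icc)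
      have h1 : G t0 - ε ≤ ((Finset.univ.filter (fun i => p n i ω ≤ t0)).card : ℝ) / n := by
        linarith [habs.1]
      rw [le_div_iff₀ hm] at h1
      linarith
    have hLR : (L:ℝ) ≤ ((Finset.univ.filter (fun i => p n i ω ≤ t0)).card : ℝ) := by
      have heq : (n:ℝ) * (G t0 - ε) = (n:ℝ) * t0 / α + (n:ℝ) * (c - ε) := by
        rw [hcdef]; ring
      linarith
    have hLlhat : L ≤ lhat n ω := by
      refine hmax n ω L hLn ?_
      have h1 : (L:ℝ) ≤ ((Finset.univ.filter (fun i => p n i ω ≤ α * (L:ℝ) / (n:ℝ))).card : ℝ) :=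
        hLR.trans (by exact_mod_cast Finset.card_le_card hsub)
      exact_mod_cast h1
    obtain ⟨l, hldef⟩ : ∃ l : ℕ, l = lhat n ω := ⟨_, rfl⟩
    rw [← hldef] at hω
    have hl1 : (n:ℝ) * t0 / α ≤ (l:ℝ) := by
      rw [hldef]
      exact hL1.trans (by exact_mod_cast hLlhat)
    have hlpos : (0:ℝ) < (l:ℝ) :=
      lt_of_lt_of_le (div_pos (mul_pos hm ht0pos) hα0) hl1
    have hln : (l:ℝ) ≤ (n:ℝ) := by
      rw [hldef]; exact_mod_cast hlm n ω
    obtain ⟨τ, hτdef⟩ : ∃ τ : ℝ, τ = α * (l:ℝ) / (n:ℝ) := ⟨_, rfl⟩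
    rw [← hτdef] at hω
    have hτ0 : 0 ≤ τ := by
      rw [hτdef]
      exact div_nonneg (mul_nonneg hα0.le hlpos.le) hm.le
    have hτ1 : τ ≤ 1 := by
      rw [hτdef, div_le_one hm]
      nlinarith
    obtain ⟨V, hVdef⟩ : ∃ V : ℝ, V = (((H0 n).filter (fun i => p n i ω ≤ τ)).card : ℝ) :=
      ⟨_, rfl⟩
    rw [← hVdef] at hω
    have hVnn : 0 ≤ V := by rw [hVdef]; exact_mod_cast Nat.zero_le _
    have hVm0 : V ≤ (m0 n : ℝ) := by
      rw [hVdef, ← hm0 n]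
      exact_mod_cast Finset.card_filter_le _ _
    have hVle : V ≤ (m0 n : ℝ) * (τ + ε) := by
      by_cases hm00 : m0 n = 0
      · have hV0 : V ≤ 0 := by rw [hm00] at hVm0; exact_mod_cast hVm0
        rw [hm00]
        norm_num
        linarith
      · have hm0pos : (0:ℝ) < (m0 n : ℝ) := by
          exact_mod_cast Nat.pos_of_ne_zero hm00
        have habs := abs_le.mp (hGb τ ⟨hτ0, hτ1⟩)
        have h1 : V / (m0 n : ℝ) ≤ τ + ε := by
          rw [hVdef]; linarith [habs.2]
        rw [div_le_iff₀ hm0pos] at h1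
        linarith
    -- final bound : V ≤ α * l
    have hK : (m0 n : ℝ) ≤ (1+π0)/2 * (n:ℝ) := by
      rw [div_lt_iff₀ hm] at hn2
      linarith
    have hml : (n:ℝ) ≤ α * (l:ℝ) / t0 := by
      rw [le_div_iff₀ ht0pos]
      rw [div_le_iff₀ hα0] at hl1
      linarith
    have h5 : (n:ℝ) * τ = α * (l:ℝ) := by
      rw [hτdef, mul_comm]
      exact div_mul_cancel₀ _ hm.ne'
    have hKpos : (0:ℝ) < (1+π0)/2 := by linarith
    have h6 : (m0 n : ℝ) * τ ≤ (1+π0)/2 * (α * l) := by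
      calc (m0 n : ℝ) * τ ≤ ((1+π0)/2 * n) * τ := mul_le_mul_of_nonneg_right hK hτ0
        _ = (1+π0)/2 * ((n:ℝ) * τ) := by ring
        _ = (1+π0)/2 * (α * l) := by rw [h5]
    have hαl0 : (0:ℝ) ≤ α * (l:ℝ) / t0 :=
      div_nonneg (mul_nonneg hα0.le hlpos.le) ht0pos.le
    have h7 : (m0 n : ℝ) * ε ≤ (1-π0)/2 * (α * l) := by
      calc (m0 n : ℝ) * ε ≤ ((1+π0)/2 * n) * ε :=
            mul_le_mul_of_nonneg_right hK hε.le
        _ ≤ ((1+π0)/2 * (α * (l:ℝ) / t0)) * ε :=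
            mul_le_mul_of_nonneg_right
              (mul_le_mul_of_nonneg_left hml hKpos.le) hε.le
        _ ≤ ((1+π0)/2 * (α * (l:ℝ) / t0)) * (t0 * (1 - π0) / (1 + π0)) :=
            mul_le_mul_of_nonneg_left hεt (mul_nonneg hKpos.le hαl0)
        _ = (1-π0)/2 * (α * l) := by
            have ht0ne : t0 ≠ 0 := ht0pos.ne'
            have hπne : (1:ℝ) + π0 ≠ 0 := by linarith
            rw [show ((1+π0)/2 * (α * (l:ℝ) / t0)) * (t0 * (1 - π0) / (1 + π0))
                = ((t0/t0) * ((1+π0)/(1+π0))) * ((1-π0)/2 * (α*(l:ℝ))) from by ring,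
              div_self ht0ne, div_self hπne]
            ring
    have hVαl : V ≤ α * (l:ℝ) := by nlinarith
    -- contradiction with hω
    have hmax1 : max ((l:ℕ):ℝ) 1 = (l:ℝ) := by
      apply max_eq_left
      have h1 : 0 < l := by exact_mod_cast hlpos
      exact_mod_cast h1
    rw [hmax1] at hω
    have hfin : V / (l:ℝ) ≤ α := (div_le_iff₀ hlpos).mpr (by linarith)
    exact absurd hω (not_lt.mpr hfin)
  refine tendsto_of_tendsto_of_tendsto_of_le_of_le' tendsto_const_nhds ?_
    (Eventually.of_forall fun n => zero_le) key
  simpa using hA.add hB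
end

section
/- Step-up threshold representation (Lemma 6.1): for the step-up procedure with nondecreasing critical values (τ_ℓ), define f_m(t) = (1/m)·min{ℓ ∈ {0,...,m+1} : τ_ℓ ≥ t} (with τ_0 = 0, τ_{m+1} = 1) and t̂ = sup{t ∈ [0,1] : Ĝ_m(t) ≥ f_m(t)} where Ĝ_m(t) = R_m(t)/m. Then the supremum is attained (Ĝ_m(t̂) ≥ f_m(t̂)) and t̂ = τ_{ℓ̂}, where ℓ̂ is the step-up rejection number. -/
/-- Step-up threshold representation (Lemma 6.1): with
`f_m(t) = (1/m)·min{ℓ ∈ {0,…,m+1} : τ_ℓ ≥ t}` (where `τ_0 = 0`, `τ_{m+1} = 1`)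
and `t̂ = sup{t ∈ [0,1] : Ĝ_m(t) ≥ f_m(t)}`, `Ĝ_m(t) = R_m(t)/m`, the supremum
is attained (`Ĝ_m(t̂) ≥ f_m(t̂)`) and `t̂ = τ_ℓ̂` for the step-up rejection
number `ℓ̂` (here `q` is the sorted sequence of p-values). -/
theorem stmt_14 (m : ℕ) (hm : 1 ≤ m) (p : Fin m → ℝ)
    (hp : ∀ i, p i ∈ Set.Icc (0:ℝ) 1)
    (τ : ℕ → ℝ) (hτ0 : τ 0 = 0) (hτm1 : τ (m + 1) = 1)
    (hτmono : ∀ k l, k ≤ l → l ≤ m + 1 → τ k ≤ τ l)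
    (q : ℕ → ℝ) (hq0 : q 0 = 0)
    (σ : Equiv.Perm (Fin m)) (hqp : ∀ i : Fin m, q ((i : ℕ) + 1) = p (σ i))
    (hqmono : ∀ k l, k ≤ l → l ≤ m → q k ≤ q l)
    (lhat : ℕ) (hlm : lhat ≤ m) (hmem : q lhat ≤ τ lhat)
    (hmaxl : ∀ l, l ≤ m → q l ≤ τ l → l ≤ lhat)
    (f : ℝ → ℝ) (hf : ∀ t, f t = ((sInf {l : ℕ | l ≤ m + 1 ∧ t ≤ τ l} : ℕ) : ℝ) / m)
    (that : ℝ)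
    (hthat : that = sSup {t : ℝ | t ∈ Set.Icc (0:ℝ) 1 ∧
      f t ≤ ((Finset.univ.filter (fun i => p i ≤ t)).card : ℝ) / m}) :
    f that ≤ ((Finset.univ.filter (fun i => p i ≤ that)).card : ℝ) / m
      ∧ that = τ lhat := by
  have hm0 : (0:ℝ) < m := by exact_mod_cast hm
  -- rewrite the p-filter count via the permutation σ
  have key : ∀ t : ℝ, (Finset.univ.filter (fun i => p i ≤ t)).card
      = (Finset.univ.filter (fun i : Fin m => q ((i : ℕ) + 1) ≤ t)).card := by
    intro t
    apply Finset.card_bij (fun i _ => σ.symm i)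
    · intro i hi
      simp only [Finset.mem_filter, Finset.mem_univ, true_and] at hi ⊢
      rw [hqp]; simpa using hi
    · intro a ha b hb hab
      exact σ.symm.injective hab
    · intro b hb
      refine ⟨σ b, ?_, by simp⟩
      simp only [Finset.mem_filter, Finset.mem_univ, true_and] at hb ⊢
      rw [hqp] at hb; exact hb
  set c : ℝ → ℕ := fun t => (Finset.univ.filter (fun i : Fin m => q ((i : ℕ) + 1) ≤ t)).card
    with hc
  have hcm : ∀ t, c t ≤ m := by
    intro t
    calc c t ≤ (Finset.univ : Finset (Fin m)).card := Finset.card_filter_le _ _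
    _ = m := by simp
  -- Lemma B : q (c t) ≤ t for 0 ≤ t
  have hB : ∀ t : ℝ, 0 ≤ t → q (c t) ≤ t := by
    intro t ht
    rcases Nat.eq_zero_or_pos (c t) with h0 | hpos
    · rw [h0, hq0]; exact ht
    · by_contra hcon
      -- then every i in the filter satisfies i+1 < c t
      have hall : ∀ i ∈ Finset.univ.filter (fun i : Fin m => q ((i : ℕ) + 1) ≤ t),
          (i : ℕ) < c t - 1 := by
        intro i hi
        simp only [Finset.mem_filter, Finset.mem_univ, true_and] at hi
        by_contra hlt
        push_neg at hlt
        have h1 : c t ≤ (i : ℕ) + 1 := by omega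
        have : q (c t) ≤ q ((i : ℕ) + 1) := hqmono _ _ h1 i.isLt
        exact hcon (le_trans this hi)
      have hcard : c t ≤ (Finset.range (c t - 1)).card := by
        refine Finset.card_le_card_of_injOn (fun i => (i : ℕ)) ?_ ?_
        · intro i hi
          exact Finset.mem_range.2 (hall i hi)
        · exact fun a _ b _ hab => Fin.val_injective hab
      rw [Finset.card_range] at hcard
      omega
  -- Lemma C : if j ≤ m and q j ≤ t then j ≤ c t
  have hC : ∀ (j : ℕ) (t : ℝ), j ≤ m → q j ≤ t → j ≤ c t := by
    intro j t hjm hqj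
    have : (Finset.range j).card ≤ c t := by
      refine Finset.card_le_card_of_injOn
        (fun k => (⟨k % m, Nat.mod_lt _ (by omega)⟩ : Fin m)) ?_ ?_
      · intro k hk
        have hk' : k < j := Finset.mem_range.1 hk
        have hkm : k < m := lt_of_lt_of_le hk' hjm
        simp only [Finset.mem_filter, Finset.mem_univ, true_and]
        simp only [Finset.mem_coe, Finset.mem_filter, Finset.mem_univ, true_and, Nat.mod_eq_of_lt hkm]
        exact le_trans (hqmono _ _ (by omega) hjm) hqj
      · intro a ha b hb hab
        have ha' : a < m := lt_of_lt_of_le (Finset.mem_range.1 ha) hjm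
        have hb' : b < m := lt_of_lt_of_le (Finset.mem_range.1 hb) hjm
        have := congrArg Fin.val hab
        simpa [Nat.mod_eq_of_lt ha', Nat.mod_eq_of_lt hb'] using this
    simpa using this
  set S : Set ℝ := {t : ℝ | t ∈ Set.Icc (0:ℝ) 1 ∧
      f t ≤ ((Finset.univ.filter (fun i => p i ≤ t)).card : ℝ) / m} with hS
  -- τ lhat bounds
  have hτl0 : (0:ℝ) ≤ τ lhat := by rw [← hτ0]; exact hτmono 0 lhat (by omega) (by omega)
  have hτl1 : τ lhat ≤ 1 := by rw [← hτm1]; exact hτmono lhat (m+1) (by omega) le_rfl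
  -- τ lhat ∈ S
  have h1 : τ lhat ∈ S := by
    refine ⟨⟨hτl0, hτl1⟩, ?_⟩
    rw [hf, key]
    have hinf : sInf {l : ℕ | l ≤ m + 1 ∧ τ lhat ≤ τ l} ≤ lhat :=
      Nat.sInf_le ⟨by omega, le_rfl⟩
    have hcl : lhat ≤ c (τ lhat) := hC lhat (τ lhat) hlm hmem
    apply (div_le_div_iff_of_pos_right hm0).2
    exact_mod_cast le_trans hinf hcl
  -- every t ∈ S satisfies t ≤ τ lhat
  have h2 : ∀ t ∈ S, t ≤ τ lhat := by
    intro t ht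
    obtain ⟨⟨ht0, ht1⟩, hft⟩ := ht
    rw [hf, key] at hft
    have hne : {l : ℕ | l ≤ m + 1 ∧ t ≤ τ l}.Nonempty := ⟨m + 1, le_rfl, by rw [hτm1]; exact ht1⟩
    set ls := sInf {l : ℕ | l ≤ m + 1 ∧ t ≤ τ l} with hls
    obtain ⟨hls1, hls2⟩ := Nat.sInf_mem hne
    have hlc : ls ≤ c t := by
      have := (div_le_div_iff_of_pos_right hm0).1 hft
      exact_mod_cast this
    have hlsm : ls ≤ m := le_trans hlc (hcm t)
    have hqls : q ls ≤ τ ls := le_trans (hqmono ls (c t) hlc (hcm t)) (le_trans (hB t ht0) hls2)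
    have : ls ≤ lhat := hmaxl ls hlsm hqls
    exact le_trans hls2 (hτmono ls lhat this (by omega))
  have hsup : that = τ lhat := by
    rw [hthat]
    refine le_antisymm (csSup_le ⟨τ lhat, h1⟩ h2) (le_csSup ⟨τ lhat, h2⟩ h1)
  exact ⟨by rw [hsup]; exact h1.2, hsup⟩
end

section
/- The augmentation procedure controls FDP: if R⁽¹⁾ is a set of rejected hypotheses with P(|R⁽¹⁾ ∩ H_0| ≥ 1) ≤ ζ (i.e. FWER control at level ζ), let ℓ⁽¹⁾ = |R⁽¹⁾| and ℓ̃ = ⌊ℓ⁽¹⁾/(1−α)⌋ ∧ m, and reject the ℓ̃ hypotheses with smallest p-values (assuming R⁽¹⁾ consists of the ℓ⁽¹⁾ smallest p-values). Then P(FDP of the augmented procedure > α) ≤ ζ. -/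
open MeasureTheory

/-- The augmentation procedure controls the FDP: if the initial procedure
`R⁽¹⁾ = {i : p_i ≤ τ₁}` controls the FWER at level `ζ`
(`P(∃ i ∈ H₀, p_i ≤ τ₁) ≤ ζ`), `ℓ⁽¹⁾ = |R⁽¹⁾|`,
`ℓ̃ = ⌊ℓ⁽¹⁾/(1−α)⌋ ∧ m`, and the augmented procedure rejects a set `A` of `ℓ̃`
hypotheses containing `R⁽¹⁾` (the `ℓ̃` smallest p-values), then
`P(FDP of the augmented procedure > α) ≤ ζ`. -/
theorem stmt_15 {Ω : Type*} [MeasurableSpace Ω] (P : Measure Ω) [IsProbabilityMeasure P]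
    (m : ℕ) (H0 : Finset (Fin m))
    (p : Fin m → Ω → ℝ) (hmeas : ∀ i, Measurable (p i))
    (α ζ : ℝ) (hα : α ∈ Set.Ioo (0:ℝ) 1) (hζ : ζ ∈ Set.Ioo (0:ℝ) 1)
    (τ1 : Ω → ℝ)
    (hFWER : P {ω | ∃ i ∈ H0, p i ω ≤ τ1 ω} ≤ ENNReal.ofReal ζ)
    (l1 : Ω → ℕ) (hl1 : ∀ ω, l1 ω = (Finset.univ.filter (fun i => p i ω ≤ τ1 ω)).card)
    (ltil : Ω → ℕ) (hltil : ∀ ω, ltil ω = min ⌊(l1 ω : ℝ) / (1 - α)⌋₊ m)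
    (A : Ω → Finset (Fin m))
    (hAcard : ∀ ω, (A ω).card = ltil ω)
    (hAsub : ∀ ω (i : Fin m), p i ω ≤ τ1 ω → i ∈ A ω) :
    P {ω | α < ((A ω ∩ H0).card : ℝ) / max ((ltil ω : ℕ) : ℝ) 1}
      ≤ ENNReal.ofReal ζ := by
  refine le_trans (measure_mono ?_) hFWER
  intro ω hω
  simp only [Set.mem_setOf_eq] at hω ⊢
  by_contra hcon
  push_neg at hcon
  -- No true null rejected by initial procedure
  set R : Finset (Fin m) := Finset.univ.filter (fun i => p i ω ≤ τ1 ω) with hR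
  have hRsub : R ⊆ A ω := by
    intro i hi
    rw [hR, Finset.mem_filter] at hi
    exact hAsub ω i hi.2
  have hRH0 : ∀ i ∈ R, i ∉ H0 := by
    intro i hi
    rw [hR, Finset.mem_filter] at hi
    exact fun hH => (hcon i hH).not_ge hi.2
  -- A ∩ H0 ⊆ A \ R
  have hsub : A ω ∩ H0 ⊆ A ω \ R := by
    intro i hi
    rw [Finset.mem_inter] at hi
    rw [Finset.mem_sdiff]
    exact ⟨hi.1, fun hiR => hRH0 i hiR hi.2⟩
  have hcard : (A ω ∩ H0).card ≤ ltil ω - l1 ω := by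
    calc (A ω ∩ H0).card ≤ (A ω \ R).card := Finset.card_le_card hsub
    _ = (A ω).card - R.card := Finset.card_sdiff_of_subset hRsub
    _ = ltil ω - l1 ω := by rw [hAcard, hl1]
  have hl1le : l1 ω ≤ ltil ω := by
    have := Finset.card_le_card hRsub
    rw [hAcard] at this
    rw [hl1]; exact this
  -- real inequality
  have hltilR : (ltil ω : ℝ) * (1 - α) ≤ l1 ω := by
    have h1 : (ltil ω : ℝ) ≤ (l1 ω : ℝ) / (1 - α) := by
      rw [hltil]
      calc ((min ⌊(l1 ω : ℝ) / (1 - α)⌋₊ m : ℕ) : ℝ)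
          ≤ (⌊(l1 ω : ℝ) / (1 - α)⌋₊ : ℝ) := by
            exact_mod_cast min_le_left _ _
        _ ≤ (l1 ω : ℝ) / (1 - α) :=
            Nat.floor_le (div_nonneg (Nat.cast_nonneg _) (by linarith [hα.2]))
    have hpos : (0:ℝ) < 1 - α := by linarith [hα.2]
    calc (ltil ω : ℝ) * (1 - α) ≤ ((l1 ω : ℝ) / (1 - α)) * (1 - α) := by
          exact mul_le_mul_of_nonneg_right h1 hpos.le
      _ = l1 ω := by field_simp
  have hfdp : ((A ω ∩ H0).card : ℝ) ≤ α * max ((ltil ω : ℕ) : ℝ) 1 := by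
    calc ((A ω ∩ H0).card : ℝ) ≤ ((ltil ω - l1 ω : ℕ) : ℝ) := by exact_mod_cast hcard
      _ = (ltil ω : ℝ) - l1 ω := by rw [Nat.cast_sub hl1le]
      _ ≤ α * (ltil ω : ℝ) := by nlinarith
      _ ≤ α * max ((ltil ω : ℕ) : ℝ) 1 :=
          mul_le_mul_of_nonneg_left (le_max_left _ _) hα.1.le
  have hmaxpos : (0:ℝ) < max ((ltil ω : ℕ) : ℝ) 1 := lt_of_lt_of_le one_pos (le_max_right _ _)
  rw [lt_div_iff₀ hmaxpos] at hω
  linarith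
end

section
/- Asymptotic FDP limit of the oracle step-up procedure (part of Theorem 4.3's proof): if t̂ = sup{t : Ĝ_m(t) ≥ f_m(t)} where f_m is a nondecreasing sequence of functions converging pointwise (hence uniformly on [0,1], by monotonicity and continuity of the limit) to f_∞(t) = π_0 t/α with π_0 > α, Ĝ_m converges uniformly a.s. to a continuous G satisfying: G(t) = π_0 t/α has at most one solution in (0,1) and lim_{t→0+} G(t)/t ∈ (π_0/α, ∞]; then t̂ converges a.s. to t* = sup{t ∈ [0,1] : G(t) ≥ π_0 t/α} ∈ (0,1). -/
open MeasureTheory Filter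

/-- Almost sure convergence of the step-up threshold to the crossing point
(part of the proof of Theorem 4.3): if `t̂_n = sup{t : Ĝ_n(t) ≥ f_n(t)}` with
the supremum attained, `f_n` nondecreasing converging pointwise to
`t ↦ π₀ t/α` with `π₀ > α`, `Ĝ_n → G` uniformly a.s. with `G` continuous,
`G(t) = π₀ t/α` having at most one solution in `(0,1)` and
`lim_{t→0⁺} G(t)/t ∈ (π₀/α, ∞]`, then `t* = sup{t ∈ [0,1] : G(t) ≥ π₀ t/α}`
belongs to `(0,1)` and `t̂_n → t*` almost surely. -/
theorem stmt_18 {Ω : Type*} [MeasurableSpace Ω] (P : Measure Ω) [IsProbabilityMeasure P]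
    (α π0 : ℝ) (hα : α ∈ Set.Ioo (0:ℝ) 1) (hπ0 : π0 ∈ Set.Ioo α 1)
    (G : ℝ → ℝ) (hGcont : ContinuousOn G (Set.Icc 0 1))
    (hGmono : MonotoneOn G (Set.Icc 0 1))
    (hGrange : ∀ t ∈ Set.Icc (0:ℝ) 1, G t ∈ Set.Icc (0:ℝ) 1)
    (hunique : ∀ t ∈ Set.Ioo (0:ℝ) 1, ∀ t' ∈ Set.Ioo (0:ℝ) 1,
      G t = π0 * t / α → G t' = π0 * t' / α → t = t')
    (hnc : Tendsto (fun t => G t / t) (nhdsWithin 0 (Set.Ioi 0)) atTop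
      ∨ ∃ L : ℝ, π0 / α < L ∧
          Tendsto (fun t => G t / t) (nhdsWithin 0 (Set.Ioi 0)) (nhds L))
    (f : ℕ → ℝ → ℝ) (hfmono : ∀ n, MonotoneOn (f n) (Set.Icc 0 1))
    (hfconv : ∀ t ∈ Set.Icc (0:ℝ) 1,
      Tendsto (fun n => f n t) atTop (nhds (π0 * t / α)))
    (Ghat : ℕ → Ω → ℝ → ℝ)
    (hGhatmono : ∀ n ω, MonotoneOn (Ghat n ω) (Set.Icc 0 1))
    (hGhatrange : ∀ n ω, ∀ t ∈ Set.Icc (0:ℝ) 1, Ghat n ω t ∈ Set.Icc (0:ℝ) 1)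
    (hunif : ∀ᵐ ω ∂P, ∀ ε > (0:ℝ), ∀ᶠ n in atTop,
      ∀ t ∈ Set.Icc (0:ℝ) 1, |Ghat n ω t - G t| ≤ ε)
    (that : ℕ → Ω → ℝ)
    (hthatmem : ∀ n ω, that n ω ∈ Set.Icc (0:ℝ) 1)
    (hcross : ∀ n ω, f n (that n ω) ≤ Ghat n ω (that n ω))
    (hmax : ∀ n ω, ∀ t ∈ Set.Icc (0:ℝ) 1, f n t ≤ Ghat n ω t → t ≤ that n ω)
    (tstar : ℝ)
    (htstar : tstar = sSup {t : ℝ | t ∈ Set.Icc (0:ℝ) 1 ∧ π0 * t / α ≤ G t}) :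
    tstar ∈ Set.Ioo (0:ℝ) 1 ∧
      ∀ᵐ ω ∂P, Tendsto (fun n => that n ω) atTop (nhds tstar) := by
  obtain ⟨hα0, hα1⟩ := hα
  obtain ⟨hπα, hπ1⟩ := hπ0
  have hπpos : 0 < π0 := hα0.trans hπα
  set S : Set ℝ := {t : ℝ | t ∈ Set.Icc (0:ℝ) 1 ∧ π0 * t / α ≤ G t} with hSdef
  have h0S : (0:ℝ) ∈ S := by
    refine ⟨⟨le_refl 0, zero_le_one⟩, ?_⟩
    have := (hGrange 0 ⟨le_refl 0, zero_le_one⟩).1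
    simpa using this
  have hSsub : S ⊆ Set.Icc 0 1 := fun t ht => ht.1
  have hSbdd : BddAbove S := ⟨1, fun x hx => hx.1.2⟩
  have hlin : ContinuousOn (fun t : ℝ => π0 * t / α) (Set.Icc 0 1) :=
    (continuous_const.mul continuous_id |>.div_const α).continuousOn
  have hScl : IsClosed S := by
    have : S = Set.Icc 0 1 ∩ (fun t => G t - π0 * t / α) ⁻¹' Set.Ici 0 := by
      ext t
      simp only [hSdef, Set.mem_setOf_eq, Set.mem_inter_iff, Set.mem_preimage, Set.mem_Ici,
        sub_nonneg]
    rw [this]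
    exact (hGcont.sub hlin).preimage_isClosed_of_isClosed isClosed_Icc isClosed_Ici
  have hScomp : IsCompact S := isCompact_Icc.of_isClosed_subset hScl hSsub
  have htS : tstar ∈ S := by
    rw [htstar]
    exact hScomp.sSup_mem ⟨0, h0S⟩
  have htstar_mem : tstar ∈ Set.Icc (0:ℝ) 1 := htS.1
  -- small t behaviour
  have hsmall : ∃ δ > (0:ℝ), ∀ t, 0 < t → t < δ → π0 / α < G t / t := by
    have hev : ∀ᶠ t in nhdsWithin 0 (Set.Ioi 0), π0 / α < G t / t := by
      rcases hnc with h | ⟨L, hL, h⟩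
      · exact h.eventually_gt_atTop _
      · exact h.eventually_const_lt hL
    rw [eventually_nhdsWithin_iff, Metric.eventually_nhds_iff] at hev
    obtain ⟨δ, hδ, h⟩ := hev
    refine ⟨δ, hδ, fun t ht1 ht2 => h ?_ ht1⟩
    rw [Real.dist_eq]
    simpa [abs_of_pos ht1] using ht2
  obtain ⟨δ, hδpos, hδ⟩ := hsmall
  have hstrict_small : ∀ t : ℝ, 0 < t → t < δ → t ≤ 1 → π0 * t / α < G t := by
    intro t ht hlt _
    have h1 := hδ t ht hlt
    rw [div_lt_div_iff₀ hα0 ht] at h1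
    rw [div_lt_iff₀ hα0]
    linarith
  have ht0 : 0 < tstar := by
    set t0 : ℝ := min (δ/2) (1/2) with ht0def
    have ht0pos : 0 < t0 := lt_min (by linarith) (by norm_num)
    have ht0δ : t0 < δ := lt_of_le_of_lt (min_le_left _ _) (by linarith)
    have ht0le1 : t0 ≤ 1 := le_trans (min_le_right _ _) (by norm_num)
    have ht0S : t0 ∈ S :=
      ⟨⟨ht0pos.le, ht0le1⟩, (hstrict_small t0 ht0pos ht0δ ht0le1).le⟩
    have : t0 ≤ tstar := htstar ▸ le_csSup hSbdd ht0S
    linarith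
  have ht1 : tstar < 1 := by
    rcases lt_or_eq_of_le htstar_mem.2 with h | h
    · exact h
    · exfalso
      have h1 := htS.2
      rw [h] at h1
      have h2 := (hGrange 1 ⟨zero_le_one, le_refl 1⟩).2
      have h3 : 1 < π0 / α := (one_lt_div hα0).mpr hπα
      rw [mul_one] at h1
      linarith
  -- G tstar = π0 tstar / α
  have heq : G tstar = π0 * tstar / α := by
    by_contra hne
    have hlt : π0 * tstar / α < G tstar := htS.2.lt_of_ne fun h => hne h.symm
    have hcontg : Tendsto (fun t => G t - π0 * t / α) (nhdsWithin tstar (Set.Icc 0 1))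
        (nhds (G tstar - π0 * tstar / α)) := (hGcont.sub hlin) tstar htstar_mem
    have hev : ∀ᶠ t in nhdsWithin tstar (Set.Icc 0 1), 0 < G t - π0 * t / α :=
      hcontg.eventually_const_lt (by linarith)
    have hmono : nhdsWithin tstar (Set.Ioc tstar 1) ≤ nhdsWithin tstar (Set.Icc 0 1) :=
      nhdsWithin_mono _ (fun x hx => ⟨le_trans ht0.le hx.1.le, hx.2⟩)
    have hneb : (nhdsWithin tstar (Set.Ioc tstar 1)).NeBot := by
      rw [← mem_closure_iff_nhdsWithin_neBot, closure_Ioc (ne_of_lt ht1)]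
      exact ⟨le_refl _, ht1.le⟩
    obtain ⟨t, hgt, htIoc⟩ := ((hev.filter_mono hmono).and self_mem_nhdsWithin).exists
    have htmemS : t ∈ S := ⟨⟨le_trans ht0.le htIoc.1.le, htIoc.2⟩, by linarith⟩
    have : t ≤ tstar := htstar ▸ le_csSup hSbdd htmemS
    exact absurd this (not_le.mpr htIoc.1)
  -- strict inequality below tstar
  have hbelow : ∀ u : ℝ, 0 < u → u < tstar → π0 * u / α < G u := by
    intro u hu hult
    have huIoo : u ∈ Set.Ioo (0:ℝ) 1 := ⟨hu, hult.trans ht1⟩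
    rcases lt_trichotomy (G u) (π0 * u / α) with h | h | h
    · exfalso
      set a : ℝ := min (δ/2) (u/2) with hadef
      have hapos : 0 < a := lt_min (by linarith) (by linarith)
      have hau : a < u := lt_of_le_of_lt (min_le_right _ _) (by linarith)
      have haδ : a < δ := lt_of_le_of_lt (min_le_left _ _) (by linarith)
      have hale1 : a ≤ 1 := le_trans hau.le huIoo.2.le
      have hga : π0 * a / α < G a := hstrict_small a hapos haδ hale1
      have hsub : Set.Icc a u ⊆ Set.Icc (0:ℝ) 1 := fun x hx =>
        ⟨le_trans hapos.le hx.1, le_trans hx.2 huIoo.2.le⟩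
      have hcg : ContinuousOn (fun t => G t - π0 * t / α) (Set.Icc a u) :=
        (hGcont.sub hlin).mono hsub
      have h0mem : (0:ℝ) ∈ Set.Icc (G u - π0 * u / α) (G a - π0 * a / α) :=
        ⟨by linarith, by linarith⟩
      obtain ⟨r, hr, hr0⟩ := intermediate_value_Icc' hau.le hcg h0mem
      have hreq : G r = π0 * r / α := by
        have : G r - π0 * r / α = 0 := hr0
        linarith
      have hrIoo : r ∈ Set.Ioo (0:ℝ) 1 :=
        ⟨lt_of_lt_of_le hapos hr.1, lt_of_le_of_lt hr.2 (hult.trans ht1)⟩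
      have hr_eq : r = tstar := hunique r hrIoo tstar ⟨ht0, ht1⟩ hreq heq
      have hr_lt : r < tstar := lt_of_le_of_lt hr.2 hult
      exact absurd hr_eq (ne_of_lt hr_lt)
    · exfalso
      have := hunique u huIoo tstar ⟨ht0, ht1⟩ h heq
      exact absurd this (ne_of_lt hult)
    · exact h
  -- strict inequality above tstar
  have habove : ∀ t : ℝ, tstar < t → t ≤ 1 → G t < π0 * t / α := by
    intro t h1 h2
    by_contra h
    push_neg at h
    have htmemS : t ∈ S := ⟨⟨le_trans ht0.le h1.le, h2⟩, h⟩
    have : t ≤ tstar := htstar ▸ le_csSup hSbdd htmemS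
    exact absurd this (not_le.mpr h1)
  refine ⟨⟨ht0, ht1⟩, ?_⟩
  filter_upwards [hunif] with ω hω
  rw [Metric.tendsto_nhds]
  intro ε hε
  have hlow : ∀ᶠ n in atTop, tstar - ε < that n ω := by
    set u : ℝ := max (tstar/2) (tstar - ε/2) with hudef
    have hu0 : 0 < u := lt_of_lt_of_le (by linarith) (le_max_left _ _)
    have hut : u < tstar := max_lt (by linarith) (by linarith)
    have huε : tstar - ε < u := lt_of_lt_of_le (by linarith) (le_max_right _ _)
    have huI : u ∈ Set.Icc (0:ℝ) 1 := ⟨hu0.le, (hut.trans ht1).le⟩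
    have hgap : π0 * u / α < G u := hbelow u hu0 hut
    set η : ℝ := (G u - π0 * u / α) / 2 with hηdef
    have hηpos : 0 < η := by simp only [hηdef]; linarith
    have h2 : ∀ᶠ n in atTop, f n u < π0 * u / α + η :=
      (hfconv u huI).eventually_lt_const (by linarith)
    filter_upwards [hω η hηpos, h2] with n hn1 hn2
    have habs := abs_le.mp (hn1 u huI)
    have hfu : f n u ≤ Ghat n ω u := by
      have : π0 * u / α + η = G u - η := by simp only [hηdef]; ring
      linarith [habs.1]
    have := hmax n ω u huI hfu
    linarith
  have hhigh : ∀ᶠ n in atTop, that n ω < tstar + ε := by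
    by_cases hcase : 1 < tstar + ε
    · exact Eventually.of_forall fun n => lt_of_le_of_lt (hthatmem n ω).2 hcase
    push_neg at hcase
    set t1 : ℝ := tstar + ε/2 with ht1def
    clear_value t1
    have h_t1 : tstar < t1 := by simp only [ht1def]; linarith
    have h_t1le : t1 ≤ 1 := by simp only [ht1def]; linarith
    have h_t1pos : 0 < t1 := ht0.trans h_t1
    have hcont2 : ContinuousOn (fun t => π0 * t / α - G t) (Set.Icc t1 1) :=
      (hlin.sub hGcont).mono (fun x hx => ⟨le_trans h_t1pos.le hx.1, hx.2⟩)
    obtain ⟨c, hcpos, hcmin⟩ : ∃ c : ℝ, 0 < c ∧ ∀ t ∈ Set.Icc t1 1, c ≤ π0 * t / α - G t := by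
      obtain ⟨tm, htm, htmin⟩ :=
        isCompact_Icc.exists_isMinOn (Set.nonempty_Icc.mpr h_t1le) hcont2
      exact ⟨π0 * tm / α - G tm,
        sub_pos.mpr (habove tm (lt_of_lt_of_le h_t1 htm.1) htm.2), fun t ht => htmin ht⟩
    obtain ⟨δ', hδ'pos, hδ'eq⟩ : ∃ d : ℝ, 0 < d ∧ d * (2 * π0) = c * α :=
      ⟨c * α / (2 * π0), by positivity, div_mul_cancel₀ _ (by positivity)⟩
    set J : ℕ := ⌈(1 - t1)/δ'⌉₊ + 1 with hJdef
    have hJbig : 1 < t1 + J * δ' := by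
      have h1' : (1 - t1)/δ' ≤ (⌈(1 - t1)/δ'⌉₊ : ℝ) := Nat.le_ceil _
      have h2' : 1 - t1 ≤ (⌈(1 - t1)/δ'⌉₊ : ℝ) * δ' := (div_le_iff₀ hδ'pos).mp h1'
      have : (J : ℝ) = (⌈(1 - t1)/δ'⌉₊ : ℝ) + 1 := by simp [hJdef]
      rw [this]
      nlinarith
    have hfgrid : ∀ᶠ n in atTop, ∀ j ∈ Finset.range (J+1),
        t1 + j * δ' ≤ 1 → π0 * (t1 + j * δ') / α - c/4 < f n (t1 + j * δ') := by
      rw [eventually_all_finset]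
      intro j _
      by_cases hjle : t1 + (j:ℝ) * δ' ≤ 1
      · have hjnn : (0:ℝ) ≤ (j:ℝ) * δ' := by positivity
        have hmem : t1 + (j:ℝ) * δ' ∈ Set.Icc (0:ℝ) 1 := ⟨by linarith, hjle⟩
        filter_upwards [(hfconv _ hmem).eventually_const_lt
          (show π0 * (t1 + (j:ℝ) * δ') / α - c/4 < π0 * (t1 + (j:ℝ) * δ') / α by linarith)]
          with n hn
        exact fun _ => hn
      · exact Eventually.of_forall fun n h => absurd h hjle
    filter_upwards [hω (c/4) (by linarith), hfgrid] with n hn1 hn2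
    by_contra hcon
    push_neg at hcon
    have hth1 : t1 ≤ that n ω := le_trans (by simp only [ht1def]; linarith) hcon
    have hthI := hthatmem n ω
    have key : ∀ j : ℕ, j ≤ J → t1 + j * δ' ≤ that n ω := by
      intro j
      induction j with
      | zero => intro _; simpa using hth1
      | succ j ih =>
        intro hjJ
        have hjJ' : j ≤ J := Nat.le_of_succ_le hjJ
        have htj : t1 + (j:ℝ) * δ' ≤ that n ω := ih hjJ'
        set tj : ℝ := t1 + (j:ℝ) * δ' with htjdef
        clear_value tj
        have htjle1 : tj ≤ 1 := htj.trans hthI.2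
        have hjnn : (0:ℝ) ≤ (j:ℝ) * δ' := by positivity
        have htjI : tj ∈ Set.Icc (0:ℝ) 1 := ⟨by simp only [htjdef]; linarith, htjle1⟩
        have hf1 : π0 * tj / α - c/4 < f n tj := by
          rw [htjdef]
          exact hn2 j (Finset.mem_range.mpr (Nat.lt_succ_of_le hjJ'))
            (by rw [← htjdef]; exact htjle1)
        have hf2 : f n tj ≤ f n (that n ω) := hfmono n htjI hthI htj
        have hf3 : f n (that n ω) ≤ Ghat n ω (that n ω) := hcross n ω
        have hf4 : Ghat n ω (that n ω) - G (that n ω) ≤ c/4 :=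
          (abs_le.mp (hn1 _ hthI)).2
        have hf5 : c ≤ π0 * (that n ω) / α - G (that n ω) := hcmin _ ⟨hth1, hthI.2⟩
        have H : π0 * tj / α + c/2 ≤ π0 * (that n ω) / α := by linarith
        have Hm : π0 * tj + c/2 * α ≤ π0 * (that n ω) := by
          have h' := mul_le_mul_of_nonneg_right H hα0.le
          rw [add_mul, div_mul_cancel₀ _ (ne_of_gt hα0), div_mul_cancel₀ _ (ne_of_gt hα0)] at h'
          exact h'
        have hfin : tj + δ' ≤ that n ω := by
          have h2pi : (0:ℝ) < 2 * π0 := by positivity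
          have hmul : (tj + δ') * (2 * π0) ≤ that n ω * (2 * π0) := by
            have Hm2 : 2 * (π0 * tj) + c * α ≤ 2 * (π0 * that n ω) := by linarith
            nlinarith [hδ'eq]
          exact le_of_mul_le_mul_right hmul h2pi
        have : t1 + ((j:ℝ) + 1) * δ' = tj + δ' := by simp only [htjdef]; ring
        push_cast
        rw [this]
        exact hfin
    have hfinal := key J le_rfl
    linarith [hthI.2, hJbig]
  filter_upwards [hlow, hhigh] with n h1 h2
  rw [Real.dist_eq, abs_sub_lt_iff]
  constructor <;> linarith
end
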